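/- arXiv:2210.07238 — 5 statements merged into one kernel-verified Lean document; each statement's English description precedes it below -/
import Mathlib

section
/- For every real x with |x| < 2, one has (arcsin(x/2))^2 / sqrt(4 - x^2) = \sum_{k=1}^\infty (binom(2k,k) x^{2k} / 16^k) * (H_{2k}^{(2)} - (1/4) H_k^{(2)}). -/
open Finset Real

noncomputable def asc (k : ℕ) : ℝ := (Nat.centralBinom k : ℝ) / 4 ^ k

noncomputable def asq (k : ℕ) : ℝ := ∑ j ∈ Finset.range k, 1 / (2 * (j : ℝ) + 1) ^ 2

noncomputable def asa (k : ℕ) : ℝ := asc k / (2 * k + 1)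

noncomputable def ass (k : ℕ) : ℝ := 2 * asc k * asq k

lemma asc_pos (k : ℕ) : 0 < asc k := by
  apply div_pos (by exact_mod_cast Nat.centralBinom_pos k) (by positivity)

lemma asc_rec (k : ℕ) : (2 * (k : ℝ) + 2) * asc (k + 1) = (2 * k + 1) * asc k := by
  have h := Nat.succ_mul_centralBinom_succ k
  have h' : ((k : ℝ) + 1) * (Nat.centralBinom (k + 1) : ℝ)
      = 2 * (2 * k + 1) * (Nat.centralBinom k : ℝ) := by exact_mod_cast h
  have h4 : (4 : ℝ) ^ (k + 1) = 4 * 4 ^ k := by ring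
  unfold asc
  rw [h4]
  field_simp
  nlinarith [h', pow_pos (show (0:ℝ) < 4 by norm_num) k]

lemma asc_le_one (k : ℕ) : asc k ≤ 1 := by
  induction k with
  | zero => simp [asc, Nat.centralBinom]
  | succ n ih =>
    have h := asc_rec n
    have h1 : (0:ℝ) < 2 * n + 2 := by positivity
    nlinarith [asc_pos n, asc_pos (n+1)]

lemma asq_nonneg (k : ℕ) : 0 ≤ asq k := by
  unfold asq; positivity

lemma asq_succ (k : ℕ) : asq (k + 1) = asq k + 1 / (2 * (k : ℝ) + 1) ^ 2 := by
  unfold asq; rw [Finset.sum_range_succ]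

lemma asq_le_two (k : ℕ) : asq k ≤ 2 := by
  have key : ∀ n : ℕ, asq (n + 1) ≤ 3 / 2 - 1 / (2 * ((n : ℝ) + 1)) := by
    intro n
    induction n with
    | zero => simp [asq_succ, asq]; norm_num
    | succ m ih =>
      rw [asq_succ]
      have hm : (0:ℝ) < (m:ℝ) + 1 := by positivity
      have h1 : (0:ℝ) < 2 * ((m:ℝ)+1) := by positivity
      have h2 : (0:ℝ) < 2 * ((m:ℝ)+1) + 1 := by positivity
      have h3 : (0:ℝ) < 2 * ((m:ℝ)+1+1) := by positivity
      have : (1:ℝ) / (2 * ((m:ℕ):ℝ) + 2 + 1) ^ 2 ≤ 1 / (2*((m:ℝ)+1)) - 1 / (2*((m:ℝ)+1+1)) := by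
        rw [div_sub_div _ _ (by positivity) (by positivity), div_le_div_iff₀ (by positivity) (by positivity)]
        ring_nf
        nlinarith [sq_nonneg ((m:ℝ)+1)]
      have hs := asq_succ (m+1)
      push_cast at ih this hs ⊢
      ring_nf at ih this hs ⊢
      nlinarith [ih, this]
  cases k with
  | zero => simp [asq]
  | succ n =>
    have h1 := key n
    have h2 : (0:ℝ) < 1 / (2 * ((n:ℝ) + 1)) := by positivity
    linarith

lemma ass_rec (k : ℕ) : (2 * (k : ℝ) + 2) * ass (k + 1) = (2 * k + 1) * ass k + 2 * asa k := by
  unfold ass asa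
  rw [asq_succ]
  have h := asc_rec k
  have h1 : (2 * (k:ℝ) + 1) ≠ 0 := by positivity
  have h2 : (2 * (k:ℝ) + 2) ≠ 0 := by positivity
  have h3 : asc (k+1) = (2 * (k:ℝ) + 1) * asc k / (2 * (k:ℝ) + 2) := by
    rw [eq_div_iff h2]; linarith [h]
  rw [h3]
  field_simp

lemma ass_zero : ass 0 = 0 := by simp [ass, asq]

lemma asa_abs_le (k : ℕ) : |asa k| ≤ 1 := by
  have h0 := (asc_pos k).le
  unfold asa
  rw [abs_of_nonneg (div_nonneg h0 (by positivity))]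
  rw [div_le_one (by positivity)]
  have := asc_le_one k
  nlinarith

lemma ass_abs_le (k : ℕ) : |ass k| ≤ 4 := by
  have h0 := (asc_pos k).le
  have h1 := asq_nonneg k
  unfold ass
  rw [abs_of_nonneg (mul_nonneg (by linarith) h1)]
  nlinarith [mul_le_mul (asc_le_one k) (asq_le_two k) h1 zero_le_one]
lemma summable_bound {r : ℝ} (h0 : 0 ≤ r) (hr : r < 1) (v : ℕ → ℝ) (C : ℝ)
    (hv : ∀ k, |v k| ≤ C * (k + 1) * r ^ k) : Summable v := by
  have hnr : ‖r‖ < 1 := by rwa [Real.norm_eq_abs, abs_of_nonneg h0]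
  have S1 : Summable (fun k : ℕ => (k : ℝ) * r ^ k) := by
    simpa using summable_pow_mul_geometric_of_norm_lt_one 1 hnr
  have S2 : Summable (fun k : ℕ => r ^ k) := summable_geometric_of_norm_lt_one hnr
  have S3 : Summable (fun k : ℕ => C * (k + 1) * r ^ k) := by
    have := (S1.add S2).mul_left C
    apply this.congr
    intro k; ring
  exact Summable.of_norm_bounded S3 (fun k => by
    rw [Real.norm_eq_abs]; exact hv k)

lemma hasDerivAt_tsum_pow (u : ℕ → ℝ) (C : ℝ) (hC : 0 ≤ C) (hb : ∀ k, |u k| ≤ C) (p : ℕ)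
    {y : ℝ} (hy : |y| < 1) :
    HasDerivAt (fun z => ∑' k, u k * z ^ (2 * k + p))
      (∑' k, u k * (2 * k + p) * y ^ (2 * k + p - 1)) y := by
  set r : ℝ := (1 + |y|) / 2 with hrdef
  have hy0 : 0 ≤ |y| := abs_nonneg y
  have hr0 : 0 < r := by rw [hrdef]; linarith
  have hr1 : r < 1 := by rw [hrdef]; linarith
  have hyr : |y| < r := by rw [hrdef]; linarith
  have hB : Summable (fun k : ℕ => C * (2 * k + p) * r ^ k) := by
    apply summable_bound hr0.le hr1 _ (C * (2 + p))
    intro k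
    rw [abs_of_nonneg (by positivity)]
    have : (2 * (k:ℝ) + p) ≤ (2 + p) * (k + 1) := by push_cast; nlinarith [Nat.cast_nonneg (α := ℝ) p, Nat.cast_nonneg (α := ℝ) k]
    have hrk : (0:ℝ) ≤ r ^ k := by positivity
    push_cast
    nlinarith [mul_le_mul_of_nonneg_right (mul_le_mul_of_nonneg_left this hC) hrk]
  refine hasDerivAt_tsum_of_isPreconnected (F := ℝ)
    (g := fun k z => u k * z ^ (2 * k + p))
    (g' := fun k z => u k * (2 * (k:ℝ) + (p:ℝ)) * z ^ (2 * k + p - 1))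
    hB (isOpen_Ioo (a := -r) (b := r))
    (isPreconnected_Ioo) (fun k z hz => ?_) (fun k z hz => ?_)
    (show (0:ℝ) ∈ Set.Ioo (-r) r by constructor <;> [linarith; linarith])
    ?_ (show y ∈ Set.Ioo (-r) r from abs_lt.1 hyr)
  · have h := (hasDerivAt_pow (2 * k + p) z).const_mul (u k)
    exact h.congr_deriv (by push_cast; ring)
  · have hz' : |z| ≤ r := le_of_lt (abs_lt.2 ⟨hz.1, hz.2⟩)
    rcases Nat.eq_zero_or_pos (2 * k + p) with h | h
    · obtain ⟨hk, hp⟩ : k = 0 ∧ p = 0 := by omega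
      subst hk; subst hp
      simp
    · have hk : k ≤ 2 * k + p - 1 := by omega
      have h1 : |z| ^ (2 * k + p - 1) ≤ r ^ (2 * k + p - 1) :=
        pow_le_pow_left₀ (abs_nonneg z) hz' _
      have h2 : r ^ (2 * k + p - 1) ≤ r ^ k := pow_le_pow_of_le_one hr0.le hr1.le hk
      rw [Real.norm_eq_abs, abs_mul, abs_mul, abs_pow,
        abs_of_nonneg (show (0:ℝ) ≤ 2 * (k:ℝ) + (p:ℝ) by positivity)]
      exact mul_le_mul (mul_le_mul_of_nonneg_right (hb k) (by positivity)) (h1.trans h2)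
        (by positivity) (by positivity)
  · apply summable_of_ne_finset_zero (s := {0})
    intro k hk
    simp only [Finset.mem_singleton] at hk
    have h : 2 * k + p ≠ 0 := by omega
    show u k * (0:ℝ) ^ (2 * k + p) = 0
    rw [zero_pow h, mul_zero]
noncomputable def Hf (y : ℝ) : ℝ := ∑' k, asc k * y ^ (2 * k)
noncomputable def Gf (y : ℝ) : ℝ := ∑' k, asa k * y ^ (2 * k + 1)
noncomputable def Sf (y : ℝ) : ℝ := ∑' k, ass k * y ^ (2 * k)

lemma asc_abs_le (k : ℕ) : |asc k| ≤ 1 := by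
  rw [abs_of_nonneg (asc_pos k).le]; exact asc_le_one k

lemma summable_cp {y : ℝ} (hy : |y| < 1) (u : ℕ → ℝ) (C : ℝ)
    (hb : ∀ k, |u k| ≤ C * (k + 1)) (e : ℕ → ℕ) (he : ∀ k, k ≤ e k) :
    Summable (fun k => u k * y ^ e k) := by
  have hC : 0 ≤ C := by
    have := (abs_nonneg (u 0)).trans (hb 0); push_cast at this; linarith
  apply summable_bound (abs_nonneg y) hy _ C
  intro k
  rw [abs_mul, abs_pow]
  have h1 : |y| ^ e k ≤ |y| ^ k := pow_le_pow_of_le_one (abs_nonneg y) hy.le (he k)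
  exact mul_le_mul (hb k) h1 (by positivity) (by positivity)

-- summabilities
lemma sum_Hf {y : ℝ} (hy : |y| < 1) : Summable (fun k => asc k * y ^ (2 * k)) :=
  summable_cp hy _ 1 (fun k => by have := asc_abs_le k; have : (0:ℝ) ≤ k := Nat.cast_nonneg k; nlinarith)
    _ (fun k => by omega)

lemma sum_Sf {y : ℝ} (hy : |y| < 1) : Summable (fun k => ass k * y ^ (2 * k)) :=
  summable_cp hy _ 4 (fun k => by have := ass_abs_le k; have : (0:ℝ) ≤ k := Nat.cast_nonneg k; nlinarith)
    _ (fun k => by omega)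

lemma sum_Gf {y : ℝ} (hy : |y| < 1) : Summable (fun k => asa k * y ^ (2 * k + 1)) :=
  summable_cp hy _ 1 (fun k => by have := asa_abs_le k; have : (0:ℝ) ≤ k := Nat.cast_nonneg k; nlinarith)
    _ (fun k => by omega)

lemma sum_Hf' {y : ℝ} (hy : |y| < 1) :
    Summable (fun k => asc k * (2 * (k:ℝ)) * y ^ (2 * k - 1)) :=
  summable_cp hy _ 2 (fun k => by
      rw [abs_mul, abs_of_nonneg (show (0:ℝ) ≤ 2 * (k:ℝ) by positivity)]
      have h1 := asc_abs_le k
      have : (0:ℝ) ≤ k := Nat.cast_nonneg k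
      nlinarith)
    _ (fun k => by omega)

lemma sum_Sf' {y : ℝ} (hy : |y| < 1) :
    Summable (fun k => ass k * (2 * (k:ℝ)) * y ^ (2 * k - 1)) :=
  summable_cp hy _ 8 (fun k => by
      rw [abs_mul, abs_of_nonneg (show (0:ℝ) ≤ 2 * (k:ℝ) by positivity)]
      have h1 := ass_abs_le k
      have : (0:ℝ) ≤ k := Nat.cast_nonneg k
      nlinarith)
    _ (fun k => by omega)

-- derivatives
lemma hasDerivAt_Hf {y : ℝ} (hy : |y| < 1) :
    HasDerivAt Hf (∑' k, asc k * (2 * (k:ℝ)) * y ^ (2 * k - 1)) y := by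
  have h := hasDerivAt_tsum_pow asc 1 zero_le_one asc_abs_le 0 hy
  simp only [add_zero, Nat.cast_zero] at h
  exact h

lemma hasDerivAt_Sf {y : ℝ} (hy : |y| < 1) :
    HasDerivAt Sf (∑' k, ass k * (2 * (k:ℝ)) * y ^ (2 * k - 1)) y := by
  have h := hasDerivAt_tsum_pow ass 4 (by norm_num) ass_abs_le 0 hy
  simp only [add_zero, Nat.cast_zero] at h
  exact h

lemma hasDerivAt_Gf {y : ℝ} (hy : |y| < 1) : HasDerivAt Gf (Hf y) y := by
  have h := hasDerivAt_tsum_pow asa 1 zero_le_one asa_abs_le 1 hy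
  have he : ∀ k : ℕ, 2 * k + 1 - 1 = 2 * k := fun k => by omega
  have hcong : (∑' k, asa k * (2 * (k:ℝ) + 1) * y ^ (2 * k + 1 - 1)) = Hf y := by
    unfold Hf
    apply tsum_congr
    intro k
    rw [he k]
    have : asa k * (2 * (k:ℝ) + 1) = asc k := by
      unfold asa
      field_simp
    rw [this]
  simp only [Nat.cast_one] at h
  rw [hcong] at h
  exact h
lemma ode_combination {y : ℝ} (hy : |y| < 1) (u : ℕ → ℝ) (C : ℝ) (hC : 0 ≤ C)
    (hb : ∀ k, |u k| ≤ C) :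
    (1 - y ^ 2) * (∑' k, u k * (2 * (k:ℝ)) * y ^ (2 * k - 1)) - y * (∑' k, u k * y ^ (2 * k))
      = ∑' k : ℕ, ((2 * (k:ℝ) + 2) * u (k + 1) - (2 * (k:ℝ) + 1) * u k) * y ^ (2 * k + 1) := by
  have A1 : Summable (fun k => u k * (2 * (k:ℝ)) * y ^ (2 * k - 1)) :=
    summable_cp hy _ (2 * C) (fun k => by
      rw [abs_mul, abs_of_nonneg (show (0:ℝ) ≤ 2 * (k:ℝ) by positivity)]
      have h1 := hb k
      have h2 : (0:ℝ) ≤ k := Nat.cast_nonneg k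
      have h3 := (abs_nonneg (u k))
      nlinarith) _ (fun k => by omega)
  have A2 : Summable (fun k => u (k + 1) * (2 * (k:ℝ) + 2) * y ^ (2 * k + 1)) :=
    summable_cp hy _ (2 * C) (fun k => by
      rw [abs_mul, abs_of_nonneg (show (0:ℝ) ≤ 2 * (k:ℝ) + 2 by positivity)]
      have h1 := hb (k + 1)
      have h2 : (0:ℝ) ≤ k := Nat.cast_nonneg k
      have h3 := (abs_nonneg (u (k + 1)))
      nlinarith) _ (fun k => by omega)
  have A3 : Summable (fun k => u k * (2 * (k:ℝ)) * y ^ (2 * k + 1)) :=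
    summable_cp hy _ (2 * C) (fun k => by
      rw [abs_mul, abs_of_nonneg (show (0:ℝ) ≤ 2 * (k:ℝ) by positivity)]
      have h1 := hb k
      have h2 : (0:ℝ) ≤ k := Nat.cast_nonneg k
      have h3 := (abs_nonneg (u k))
      nlinarith) _ (fun k => by omega)
  have A4 : Summable (fun k => u k * y ^ (2 * k + 1)) :=
    summable_cp hy _ C (fun k => by
      have h1 := hb k
      have h2 : (0:ℝ) ≤ k := Nat.cast_nonneg k
      nlinarith) _ (fun k => by omega)
  have step1 : (∑' k, u k * (2 * (k:ℝ)) * y ^ (2 * k - 1))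
      = ∑' k, u (k + 1) * (2 * (k:ℝ) + 2) * y ^ (2 * k + 1) := by
    rw [Summable.tsum_eq_zero_add A1]
    have h0 : u 0 * (2 * ((0:ℕ):ℝ)) * y ^ (2 * 0 - 1) = 0 := by norm_num
    rw [h0, zero_add]
    apply tsum_congr
    intro k
    have he : 2 * (k + 1) - 1 = 2 * k + 1 := by omega
    rw [he]
    push_cast
    ring
  have step2 : y ^ 2 * (∑' k, u k * (2 * (k:ℝ)) * y ^ (2 * k - 1))
      = ∑' k, u k * (2 * (k:ℝ)) * y ^ (2 * k + 1) := by
    rw [← tsum_mul_left]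
    apply tsum_congr
    intro k
    cases k with
    | zero => norm_num
    | succ n =>
      have he : 2 * (n + 1) - 1 = 2 * n + 1 := by omega
      have he2 : 2 * (n + 1) + 1 = (2 * n + 1) + 2 := by omega
      rw [he, he2]
      ring
  have step3 : y * (∑' k, u k * y ^ (2 * k)) = ∑' k, u k * y ^ (2 * k + 1) := by
    rw [← tsum_mul_left]
    apply tsum_congr
    intro k
    ring
  have expand : (1 - y ^ 2) * (∑' k, u k * (2 * (k:ℝ)) * y ^ (2 * k - 1))
      = (∑' k, u (k + 1) * (2 * (k:ℝ) + 2) * y ^ (2 * k + 1))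
        - ∑' k, u k * (2 * (k:ℝ)) * y ^ (2 * k + 1) := by
    rw [sub_mul, one_mul, step2]
    rw [step1]
  rw [expand, step3, ← Summable.tsum_sub A2 A3, ← Summable.tsum_sub (A2.sub A3) A4]
  apply tsum_congr
  intro k
  ring

lemma ode_H {y : ℝ} (hy : |y| < 1) :
    (1 - y ^ 2) * (∑' k, asc k * (2 * (k:ℝ)) * y ^ (2 * k - 1)) = y * Hf y := by
  have h := ode_combination hy asc 1 zero_le_one asc_abs_le
  have h2 : (∑' k : ℕ, ((2 * (k:ℝ) + 2) * asc (k + 1) - (2 * (k:ℝ) + 1) * asc k) * y ^ (2 * k + 1))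
      = 0 := by
    have : ∀ k : ℕ, ((2 * (k:ℝ) + 2) * asc (k + 1) - (2 * (k:ℝ) + 1) * asc k) * y ^ (2 * k + 1) = 0 := by
      intro k
      rw [asc_rec k]
      ring
    simp only [this]
    exact tsum_zero
  unfold Hf
  rw [h2] at h
  linarith [h]

lemma ode_S {y : ℝ} (hy : |y| < 1) :
    (1 - y ^ 2) * (∑' k, ass k * (2 * (k:ℝ)) * y ^ (2 * k - 1)) - y * Sf y = 2 * Gf y := by
  have h := ode_combination hy ass 4 (by norm_num) ass_abs_le
  have h2 : (∑' k : ℕ, ((2 * (k:ℝ) + 2) * ass (k + 1) - (2 * (k:ℝ) + 1) * ass k) * y ^ (2 * k + 1))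
      = 2 * Gf y := by
    have hc : ∀ k : ℕ, ((2 * (k:ℝ) + 2) * ass (k + 1) - (2 * (k:ℝ) + 1) * ass k) * y ^ (2 * k + 1)
        = 2 * (asa k * y ^ (2 * k + 1)) := by
      intro k
      have := ass_rec k
      linear_combination y ^ (2 * k + 1) * this
    simp only [hc]
    rw [tsum_mul_left]
    rfl
  unfold Sf
  rw [h2] at h
  linarith [h]

lemma eq_at_zero_of_deriv_zero (f : ℝ → ℝ) (hf : ∀ z : ℝ, |z| < 1 → HasDerivAt f 0 z)
    {y : ℝ} (hy : |y| < 1) : f y = f 0 := by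
  rcases le_or_gt 0 y with h | h
  · have habs : ∀ z ∈ Set.Icc (0:ℝ) y, |z| < 1 := by
      intro z hz
      rw [abs_lt] at hy ⊢
      constructor <;> [linarith [hz.1]; linarith [hz.2]]
    have := constant_of_has_deriv_right_zero
      (f := f) (a := 0) (b := y)
      (fun z hz => ((hf z (habs z hz)).continuousAt).continuousWithinAt)
      (fun z hz => ((hf z (habs z (Set.mem_Icc.2 ⟨hz.1, hz.2.le⟩))).hasDerivWithinAt))
      y (Set.mem_Icc.2 ⟨h, le_refl y⟩)
    exact this
  · have habs : ∀ z ∈ Set.Icc y (0:ℝ), |z| < 1 := by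
      intro z hz
      rw [abs_lt] at hy ⊢
      constructor <;> [linarith [hz.1]; linarith [hz.2]]
    have := constant_of_has_deriv_right_zero
      (f := f) (a := y) (b := 0)
      (fun z hz => ((hf z (habs z hz)).continuousAt).continuousWithinAt)
      (fun z hz => ((hf z (habs z (Set.mem_Icc.2 ⟨hz.1, hz.2.le⟩))).hasDerivWithinAt))
      0 (Set.mem_Icc.2 ⟨h.le, le_refl (0:ℝ)⟩)
    exact this.symm
lemma one_sub_sq_pos {z : ℝ} (hz : |z| < 1) : 0 < 1 - z ^ 2 := by
  have h1 := abs_nonneg z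
  have h2 : z ^ 2 = |z| ^ 2 := (sq_abs z).symm
  nlinarith

lemma sqrt_deriv {z : ℝ} (hz : |z| < 1) :
    HasDerivAt (fun w => Real.sqrt (1 - w ^ 2)) (-(2 * z) / (2 * Real.sqrt (1 - z ^ 2))) z := by
  have h1 : HasDerivAt (fun w : ℝ => 1 - w ^ 2) (-(2 * z)) z := by
    simpa using ((hasDerivAt_pow 2 z).const_sub 1)
  exact h1.sqrt (ne_of_gt (one_sub_sq_pos hz))

lemma Hf_zero : Hf 0 = 1 := by
  unfold Hf
  rw [tsum_eq_single 0 (fun k hk => by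
    rw [zero_pow (show 2 * k ≠ 0 by omega), mul_zero])]
  norm_num [asc, Nat.centralBinom]

lemma Hf_mul_sqrt {y : ℝ} (hy : |y| < 1) : Real.sqrt (1 - y ^ 2) * Hf y = 1 := by
  have hd : ∀ z : ℝ, |z| < 1 → HasDerivAt (fun w => Real.sqrt (1 - w ^ 2) * Hf w) 0 z := by
    intro z hz
    have h1 := (sqrt_deriv hz).mul (hasDerivAt_Hf hz)
    have hpos := one_sub_sq_pos hz
    have hs : 0 < Real.sqrt (1 - z ^ 2) := Real.sqrt_pos.2 hpos
    have hss : Real.sqrt (1 - z ^ 2) ^ 2 = 1 - z ^ 2 := Real.sq_sqrt hpos.le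
    have key := ode_H hz
    have hzero : -(2 * z) / (2 * Real.sqrt (1 - z ^ 2)) * Hf z
        + Real.sqrt (1 - z ^ 2) * (∑' k, asc k * (2 * (k:ℝ)) * z ^ (2 * k - 1)) = 0 := by
      have h2s : 2 * Real.sqrt (1 - z ^ 2) ≠ 0 := by positivity
      rw [div_mul_eq_mul_div, div_add' _ _ _ h2s, div_eq_zero_iff]
      left
      linear_combination (2:ℝ) * key + 2 * (∑' k : ℕ, asc k * (2 * (k:ℝ)) * z ^ (2 * k - 1)) * hss
    rw [hzero] at h1
    exact h1
  have h := eq_at_zero_of_deriv_zero _ hd hy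
  rw [h]
  norm_num [Hf_zero]
lemma Hf_eq {y : ℝ} (hy : |y| < 1) : Hf y = 1 / Real.sqrt (1 - y ^ 2) := by
  have hs : 0 < Real.sqrt (1 - y ^ 2) := Real.sqrt_pos.2 (one_sub_sq_pos hy)
  field_simp
  linear_combination Hf_mul_sqrt hy

lemma Gf_zero : Gf 0 = 0 := by
  unfold Gf
  rw [tsum_eq_single 0 (fun k hk => by
    rw [zero_pow (show 2 * k + 1 ≠ 0 by omega), mul_zero])]
  norm_num

lemma ne_one_of_abs_lt {z : ℝ} (hz : |z| < 1) : z ≠ 1 := by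
  intro h; rw [h] at hz; norm_num at hz

lemma ne_neg_one_of_abs_lt {z : ℝ} (hz : |z| < 1) : z ≠ -1 := by
  intro h; rw [h] at hz; norm_num at hz

lemma Gf_eq {y : ℝ} (hy : |y| < 1) : Gf y = Real.arcsin y := by
  have hd : ∀ z : ℝ, |z| < 1 → HasDerivAt (fun w => Gf w - Real.arcsin w) 0 z := by
    intro z hz
    have h1 := (hasDerivAt_Gf hz).sub
      (Real.hasDerivAt_arcsin (ne_neg_one_of_abs_lt hz) (ne_one_of_abs_lt hz))
    have h0 : Hf z - 1 / Real.sqrt (1 - z ^ 2) = 0 := by rw [Hf_eq hz]; ring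
    rwa [h0] at h1
  have h := eq_at_zero_of_deriv_zero _ hd hy
  simp only [Gf_zero, Real.arcsin_zero, sub_zero] at h
  linarith [h]

lemma Sf_zero : Sf 0 = 0 := by
  unfold Sf
  rw [tsum_eq_single 0 (fun k hk => by
    rw [zero_pow (show 2 * k ≠ 0 by omega), mul_zero])]
  norm_num [ass_zero]

lemma Sf_mul_sqrt {y : ℝ} (hy : |y| < 1) :
    Real.sqrt (1 - y ^ 2) * Sf y = Real.arcsin y ^ 2 := by
  have hd : ∀ z : ℝ, |z| < 1 →
      HasDerivAt (fun w => Real.sqrt (1 - w ^ 2) * Sf w - Real.arcsin w ^ 2) 0 z := by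
    intro z hz
    have hpos := one_sub_sq_pos hz
    have hs : 0 < Real.sqrt (1 - z ^ 2) := Real.sqrt_pos.2 hpos
    have hss : Real.sqrt (1 - z ^ 2) ^ 2 = 1 - z ^ 2 := Real.sq_sqrt hpos.le
    have harc := Real.hasDerivAt_arcsin (ne_neg_one_of_abs_lt hz) (ne_one_of_abs_lt hz)
    have h2 : HasDerivAt (fun w => Real.arcsin w ^ 2)
        (2 * Real.arcsin z * (1 / Real.sqrt (1 - z ^ 2))) z := by
      have h := harc.pow 2
      simp at h
      rw [one_div]
      exact h
    have h1 := ((sqrt_deriv hz).mul (hasDerivAt_Sf hz)).sub h2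
    have key := ode_S hz
    rw [Gf_eq hz] at key
    have hzero : -(2 * z) / (2 * Real.sqrt (1 - z ^ 2)) * Sf z
        + Real.sqrt (1 - z ^ 2) * (∑' k, ass k * (2 * (k:ℝ)) * z ^ (2 * k - 1))
        - 2 * Real.arcsin z * (1 / Real.sqrt (1 - z ^ 2)) = 0 := by
      have h2s : 2 * Real.sqrt (1 - z ^ 2) ≠ 0 := by positivity
      rw [div_mul_eq_mul_div, mul_one_div, div_add' _ _ _ h2s, div_sub_div _ _ h2s hs.ne', div_eq_zero_iff]
      left
      linear_combination (2 * Real.sqrt (1 - z ^ 2)) * key + (2 * Real.sqrt (1 - z ^ 2)) * (∑' k : ℕ, ass k * (2 * (k:ℝ)) * z ^ (2 * k - 1)) * hss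
    rwa [hzero] at h1
  have h := eq_at_zero_of_deriv_zero _ hd hy
  simp only [Sf_zero, Real.arcsin_zero, mul_zero, sub_zero] at h
  norm_num at h
  linarith [h]
lemma Hq (m : ℕ) : (∑ j ∈ Finset.Icc 1 (2 * m), (1 : ℝ) / (j : ℝ) ^ 2)
    - (1 / 4) * ∑ j ∈ Finset.Icc 1 m, (1 : ℝ) / (j : ℝ) ^ 2 = asq m := by
  induction m with
  | zero => simp [asq]
  | succ m ih =>
    have e1 : 2 * (m + 1) = (2 * m + 1) + 1 := by ring
    rw [e1, Finset.sum_Icc_succ_top (by omega), Finset.sum_Icc_succ_top (by omega),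
      Finset.sum_Icc_succ_top (by omega), asq_succ]
    have hres : (1:ℝ) / (((2 * m + 1 : ℕ) + 1 : ℕ) : ℝ) ^ 2
        = (1 / 4) * (1 / (((m + 1 : ℕ)) : ℝ) ^ 2) := by
      push_cast
      field_simp
      ring
    have hcast : ((2 * m + 1 : ℕ) : ℝ) = 2 * (m : ℝ) + 1 := by push_cast; ring
    rw [hres, hcast]
    linarith [ih]

theorem arcsin_sq_div_sqrt (x : ℝ) (hx : |x| < 2) :
    (Real.arcsin (x / 2)) ^ 2 / Real.sqrt (4 - x ^ 2) =
      ∑' k : ℕ,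
        (Nat.choose (2 * (k + 1)) (k + 1) : ℝ) * x ^ (2 * (k + 1)) / 16 ^ (k + 1) *
          ((∑ j ∈ Finset.Icc 1 (2 * (k + 1)), (1 : ℝ) / (j : ℝ) ^ 2) -
            (1 / 4) * ∑ j ∈ Finset.Icc 1 (k + 1), (1 : ℝ) / (j : ℝ) ^ 2) := by
  have hy : |x / 2| < 1 := by
    rw [abs_div]
    rw [abs_of_nonneg (show (0:ℝ) ≤ 2 by norm_num)]
    linarith
  set y : ℝ := x / 2 with hydef
  have hpos := one_sub_sq_pos hy
  have hs : 0 < Real.sqrt (1 - y ^ 2) := Real.sqrt_pos.2 hpos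
  have hsqrt : Real.sqrt (4 - x ^ 2) = 2 * Real.sqrt (1 - y ^ 2) := by
    have h4 : 4 - x ^ 2 = 4 * (1 - y ^ 2) := by rw [hydef]; ring
    rw [h4, Real.sqrt_mul (by norm_num), show (4:ℝ) = 2 ^ 2 by norm_num,
      Real.sqrt_sq (by norm_num)]
  have hLHS : (Real.arcsin y) ^ 2 / Real.sqrt (4 - x ^ 2) = Sf y / 2 := by
    rw [hsqrt, ← Sf_mul_sqrt hy]
    field_simp
  rw [hLHS]
  have hterm : ∀ k : ℕ,
      (Nat.choose (2 * (k + 1)) (k + 1) : ℝ) * x ^ (2 * (k + 1)) / 16 ^ (k + 1) *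
          ((∑ j ∈ Finset.Icc 1 (2 * (k + 1)), (1 : ℝ) / (j : ℝ) ^ 2) -
            (1 / 4) * ∑ j ∈ Finset.Icc 1 (k + 1), (1 : ℝ) / (j : ℝ) ^ 2)
        = (1 / 2) * (ass (k + 1) * y ^ (2 * (k + 1))) := by
    intro k
    rw [Hq (k + 1)]
    have hcb : (Nat.choose (2 * (k + 1)) (k + 1) : ℝ) = (Nat.centralBinom (k + 1) : ℝ) := rfl
    rw [hcb]
    unfold ass
    have hax : asc (k + 1) = (Nat.centralBinom (k + 1) : ℝ) / 4 ^ (k + 1) := rfl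
    rw [hax, hydef]
    have h2 : (x / 2) ^ (2 * (k + 1)) = x ^ (2 * (k + 1)) / 4 ^ (k + 1) := by
      rw [div_pow]
      congr 1
      rw [pow_mul]
      norm_num
    rw [h2]
    have h16 : (16 : ℝ) ^ (k + 1) = 4 ^ (k + 1) * 4 ^ (k + 1) := by
      rw [← mul_pow]; norm_num
    rw [h16]
    have h4 : (4 : ℝ) ^ (k + 1) ≠ 0 := by positivity
    field_simp
  rw [tsum_congr hterm, tsum_mul_left]
  have hshift : ∑' k : ℕ, ass (k + 1) * y ^ (2 * (k + 1)) = Sf y := by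
    have h := Summable.tsum_eq_zero_add (sum_Sf hy)
    rw [ass_zero] at h
    simp only [zero_mul, zero_add] at h
    unfold Sf
    rw [h]
  rw [hshift]
  ring
end

section
/- \sum_{k=0}^\infty binom(2k,k) / ((2k+1) 16^k) * (H_{2k}^{(2)} - (1/4) H_k^{(2)}) = \pi^3 / 648. -/
open Real intervalIntegral Filter Finset Topology

namespace SCB

noncomputable def t (k : ℕ) : ℝ := (Nat.choose (2*k) k : ℝ) / ((2*(k:ℝ)+1) * 4^k)

noncomputable def g (k : ℕ) (θ : ℝ) : ℝ := ∫ φ in (0:ℝ)..θ, Real.sin φ ^ (2*k+1)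
noncomputable def h (k : ℕ) (θ : ℝ) : ℝ := ∫ φ in (0:ℝ)..θ, g k φ
noncomputable def h2 (k : ℕ) (θ : ℝ) : ℝ := ∫ φ in (0:ℝ)..θ, h k φ
noncomputable def h3 (k : ℕ) (θ : ℝ) : ℝ := ∫ φ in (0:ℝ)..θ, h2 k φ

lemma hasDerivAt_primitive {f : ℝ → ℝ} (hf : Continuous f) (θ : ℝ) :
    HasDerivAt (fun u => ∫ φ in (0:ℝ)..u, f φ) (f θ) θ :=
  intervalIntegral.integral_hasDerivAt_right (hf.intervalIntegrable _ _)
    (hf.stronglyMeasurableAtFilter _ _) hf.continuousAt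

lemma g_hasDerivAt (k : ℕ) (θ : ℝ) : HasDerivAt (g k) (Real.sin θ ^ (2*k+1)) θ :=
  hasDerivAt_primitive (continuous_sin.pow _) θ

lemma g_cont (k : ℕ) : Continuous (g k) := by
  have : Differentiable ℝ (g k) := fun x => (g_hasDerivAt k x).differentiableAt
  exact this.continuous

lemma h_hasDerivAt (k : ℕ) (θ : ℝ) : HasDerivAt (h k) (g k θ) θ :=
  hasDerivAt_primitive (g_cont k) θ

lemma h_cont (k : ℕ) : Continuous (h k) := by
  have : Differentiable ℝ (h k) := fun x => (h_hasDerivAt k x).differentiableAt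
  exact this.continuous

lemma h2_hasDerivAt (k : ℕ) (θ : ℝ) : HasDerivAt (h2 k) (h k θ) θ :=
  hasDerivAt_primitive (h_cont k) θ

lemma h2_cont (k : ℕ) : Continuous (h2 k) := by
  have : Differentiable ℝ (h2 k) := fun x => (h2_hasDerivAt k x).differentiableAt
  exact this.continuous

lemma h3_hasDerivAt (k : ℕ) (θ : ℝ) : HasDerivAt (h3 k) (h2 k θ) θ :=
  hasDerivAt_primitive (h2_cont k) θ

lemma t_pos (k : ℕ) : 0 < t k := by
  apply div_pos
  · exact_mod_cast Nat.choose_pos (by omega)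
  · positivity

lemma t_zero : t 0 = 1 := by simp [t]

lemma t_rec (k : ℕ) : (2*(k:ℝ)+1)^2 * t k = (2*(k:ℝ)+2)*(2*(k:ℝ)+3) * t (k+1) := by
  have hc : ((k:ℝ)+1) * (Nat.choose (2*(k+1)) (k+1) : ℝ)
      = 2*(2*(k:ℝ)+1) * (Nat.choose (2*k) k : ℝ) := by
    have := Nat.succ_mul_centralBinom_succ k
    simp only [Nat.centralBinom] at this
    exact_mod_cast this
  simp only [t]
  have h4 : (4:ℝ)^(k+1) = 4 * 4^k := by ring
  rw [h4]
  push_cast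
  field_simp
  linear_combination (-2*(2*(k:ℝ)+3)) * hc

lemma t_le_one (k : ℕ) : t k ≤ 1 := by
  induction k with
  | zero => simp [t_zero]
  | succ k ih =>
    have hr := t_rec k
    have hp := t_pos k
    have hp1 := t_pos (k+1)
    nlinarith

lemma byParts (k : ℕ) (θ : ℝ) :
    (2*(k:ℝ)+2) * g k θ - (2*(k:ℝ)+3) * g (k+1) θ = Real.sin θ ^ (2*k+2) * Real.cos θ := by
  have H : ∀ φ : ℝ, HasDerivAt (fun x => Real.sin x ^ (2*k+2) * Real.cos x)
      ((2*(k:ℝ)+2) * Real.sin φ ^ (2*k+1) - (2*(k:ℝ)+3) * Real.sin φ ^ (2*(k+1)+1)) φ := by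
    intro φ
    have hs := ((Real.hasDerivAt_sin φ).pow (2*k+2)).mul (Real.hasDerivAt_cos φ)
    refine hs.congr_deriv ?_
    have pyth := Real.sin_sq_add_cos_sq φ
    have hexp : 2*k+2-1 = 2*k+1 := by omega
    rw [hexp]
    simp only [Pi.pow_apply]
    push_cast
    linear_combination ((2*(k:ℝ)+2) * Real.sin φ ^ (2*k+1)) * pyth
  have key := intervalIntegral.integral_eq_sub_of_hasDerivAt (f' := fun φ =>
      (2*(k:ℝ)+2) * Real.sin φ ^ (2*k+1) - (2*(k:ℝ)+3) * Real.sin φ ^ (2*(k+1)+1))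
      (fun φ _ => H φ)
      (((continuous_const.mul (continuous_sin.pow _)).sub
        (continuous_const.mul (continuous_sin.pow _))).intervalIntegrable 0 θ)
  rw [intervalIntegral.integral_sub (f := fun x => (2*(k:ℝ)+2) * Real.sin x ^ (2*k+1))
      (g := fun x => (2*(k:ℝ)+3) * Real.sin x ^ (2*(k+1)+1)) ((continuous_const.mul (continuous_sin.pow _)).intervalIntegrable 0 θ)
      ((continuous_const.mul (continuous_sin.pow _)).intervalIntegrable 0 θ),
    intervalIntegral.integral_const_mul, intervalIntegral.integral_const_mul] at key
  simp only [Real.sin_zero, Real.cos_zero] at key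
  simp only [g]
  rw [key]
  norm_num

lemma B1 (k : ℕ) (θ : ℝ) :
    (∑ m ∈ Finset.range (k+1), t m * ((2*(m:ℝ)+1) * Real.sin θ ^ (2*m) * Real.cos θ))
      + (2*(k:ℝ)+1)^2 * t k * g k θ = 1 := by
  induction k with
  | zero =>
    have hg : g 0 θ = 1 - Real.cos θ := by
      simp only [g]
      norm_num [integral_sin]
    rw [hg]
    simp [t_zero]
  | succ k ih =>
    rw [Finset.sum_range_succ]
    have hb := byParts k θ
    have hr := t_rec k
    push_cast
    push_cast at ih
    linear_combination ih - g k θ * hr - (2*(k:ℝ)+3) * t (k+1) * hb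

lemma ext_of_deriv {F G d : ℝ → ℝ} (hF : ∀ x, HasDerivAt F (d x) x)
    (hG : ∀ x, HasDerivAt G (d x) x) (h0 : F 0 = G 0) (θ : ℝ) : F θ = G θ := by
  have hdiff : Differentiable ℝ (fun y => F y - G y) :=
    fun x => ((hF x).sub (hG x)).differentiableAt
  have hd : ∀ x, deriv (fun y => F y - G y) x = 0 := by
    intro x
    rw [HasDerivAt.deriv (f := fun y => F y - G y) ((hF x).sub (hG x))]
    ring
  have := is_const_of_deriv_eq_zero hdiff hd θ 0
  simp only [h0, sub_self] at this ⊢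
  linarith [this, h0]

lemma star1 (k : ℕ) (θ : ℝ) :
    (∑ m ∈ Finset.range (k+1), t m * Real.sin θ ^ (2*m+1))
      + (2*(k:ℝ)+1)^2 * t k * h k θ = θ := by
  refine ext_of_deriv
    (F := fun y => (∑ m ∈ Finset.range (k+1), t m * Real.sin y ^ (2*m+1))
      + (2*(k:ℝ)+1)^2 * t k * h k y)
    (G := fun y => y) (d := fun _ => 1) ?_ (fun x => hasDerivAt_id x) ?_ θ
  · intro x
    have hsum : HasDerivAt (fun y => ∑ m ∈ Finset.range (k+1), t m * Real.sin y ^ (2*m+1))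
        (∑ m ∈ Finset.range (k+1), t m * ((2*(m:ℝ)+1) * Real.sin x ^ (2*m) * Real.cos x)) x := by
      apply HasDerivAt.fun_sum
      intro m _
      have hd := ((Real.hasDerivAt_sin x).pow (2*m+1)).const_mul (t m)
      refine hd.congr_deriv ?_
      have hexp : 2*m+1-1 = 2*m := by omega
      rw [hexp]
      push_cast
      ring
    have hh := (h_hasDerivAt k x).const_mul ((2*(k:ℝ)+1)^2 * t k)
    have htot := hsum.add hh
    rw [B1 k x] at htot
    exact htot
  · simp only [Real.sin_zero]
    have h0 : h k 0 = 0 := by simp [h]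
    simp [h0]

lemma star2 (k : ℕ) (θ : ℝ) :
    (∑ m ∈ Finset.range (k+1), t m * g m θ)
      + (2*(k:ℝ)+1)^2 * t k * h2 k θ = θ^2/2 := by
  refine ext_of_deriv
    (F := fun y => (∑ m ∈ Finset.range (k+1), t m * g m y)
      + (2*(k:ℝ)+1)^2 * t k * h2 k y)
    (G := fun y => y^2/2) (d := fun y => y) ?_ ?_ ?_ θ
  · intro x
    have hsum : HasDerivAt (fun y => ∑ m ∈ Finset.range (k+1), t m * g m y)
        (∑ m ∈ Finset.range (k+1), t m * Real.sin x ^ (2*m+1)) x := by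
      apply HasDerivAt.fun_sum
      intro m _
      exact (g_hasDerivAt m x).const_mul (t m)
    have hh := (h2_hasDerivAt k x).const_mul ((2*(k:ℝ)+1)^2 * t k)
    have htot := hsum.add hh
    rw [star1 k x] at htot
    exact htot
  · intro x
    have := ((hasDerivAt_pow 2 x).div_const 2)
    refine this.congr_deriv ?_
    norm_num
  · have hg0 : ∀ m, g m 0 = 0 := fun m => by simp [g]
    have h20 : h2 k 0 = 0 := by simp [h2]
    simp [hg0, h20]

lemma star3 (k : ℕ) (θ : ℝ) :
    (∑ m ∈ Finset.range (k+1), t m * h m θ)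
      + (2*(k:ℝ)+1)^2 * t k * h3 k θ = θ^3/6 := by
  refine ext_of_deriv
    (F := fun y => (∑ m ∈ Finset.range (k+1), t m * h m y)
      + (2*(k:ℝ)+1)^2 * t k * h3 k y)
    (G := fun y => y^3/6) (d := fun y => y^2/2) ?_ ?_ ?_ θ
  · intro x
    have hsum : HasDerivAt (fun y => ∑ m ∈ Finset.range (k+1), t m * h m y)
        (∑ m ∈ Finset.range (k+1), t m * g m x) x := by
      apply HasDerivAt.fun_sum
      intro m _
      exact (h_hasDerivAt m x).const_mul (t m)
    have hh := (h3_hasDerivAt k x).const_mul ((2*(k:ℝ)+1)^2 * t k)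
    have htot := hsum.add hh
    rw [star2 k x] at htot
    exact htot
  · intro x
    have := ((hasDerivAt_pow 3 x).div_const 6)
    refine this.congr_deriv ?_
    push_cast
    ring
  · have hh0 : ∀ m, h m 0 = 0 := fun m => by simp [h]
    have h30 : h3 k 0 = 0 := by simp [h3]
    simp [hh0, h30]


lemma sin_bounds {φ : ℝ} (hφ : φ ∈ Set.Icc 0 (π/6)) :
    0 ≤ Real.sin φ ∧ Real.sin φ ≤ 1/2 := by
  obtain ⟨h0, h1⟩ := hφ
  have hπ := Real.pi_pos
  constructor
  · exact Real.sin_nonneg_of_nonneg_of_le_pi h0 (by linarith)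
  · rw [← Real.sin_pi_div_six]
    exact Real.strictMonoOn_sin.monotoneOn ⟨by linarith, by linarith⟩
      ⟨by linarith, by linarith⟩ h1

lemma g_nonneg (k : ℕ) {θ : ℝ} (hθ : θ ∈ Set.Icc 0 (π/6)) : 0 ≤ g k θ := by
  apply intervalIntegral.integral_nonneg hθ.1
  intro u hu
  exact pow_nonneg (sin_bounds (Set.mem_of_mem_of_subset hu (Set.Icc_subset_Icc le_rfl hθ.2))).1 _

lemma g_le (k : ℕ) {θ : ℝ} (hθ : θ ∈ Set.Icc 0 (π/6)) : g k θ ≤ θ * (1/2)^(2*k+1) := by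
  have key : g k θ ≤ ∫ _ in (0:ℝ)..θ, ((1:ℝ)/2)^(2*k+1) := by
    apply intervalIntegral.integral_mono_on hθ.1
      ((continuous_sin.pow _).intervalIntegrable 0 θ)
      (intervalIntegrable_const)
    intro x hx
    have hb := sin_bounds (Set.mem_of_mem_of_subset hx (Set.Icc_subset_Icc le_rfl hθ.2))
    exact pow_le_pow_left₀ hb.1 hb.2 _
  rw [intervalIntegral.integral_const, smul_eq_mul, sub_zero] at key
  exact key

lemma h_nonneg (k : ℕ) {θ : ℝ} (hθ : θ ∈ Set.Icc 0 (π/6)) : 0 ≤ h k θ := by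
  apply intervalIntegral.integral_nonneg hθ.1
  intro u hu
  exact g_nonneg k (Set.mem_of_mem_of_subset hu (Set.Icc_subset_Icc le_rfl hθ.2))

lemma h_le (k : ℕ) {θ : ℝ} (hθ : θ ∈ Set.Icc 0 (π/6)) :
    h k θ ≤ θ^2/2 * (1/2)^(2*k+1) := by
  have key : h k θ ≤ ∫ u in (0:ℝ)..θ, u * ((1:ℝ)/2)^(2*k+1) := by
    apply intervalIntegral.integral_mono_on hθ.1
      ((g_cont k).intervalIntegrable 0 θ)
      ((continuous_id.mul continuous_const).intervalIntegrable 0 θ)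
    intro x hx
    exact g_le k (Set.mem_of_mem_of_subset hx (Set.Icc_subset_Icc le_rfl hθ.2))
  rw [intervalIntegral.integral_mul_const, integral_id] at key
  calc h k θ ≤ _ := key
    _ = θ^2/2 * (1/2)^(2*k+1) := by ring

lemma h2_nonneg (k : ℕ) {θ : ℝ} (hθ : θ ∈ Set.Icc 0 (π/6)) : 0 ≤ h2 k θ := by
  apply intervalIntegral.integral_nonneg hθ.1
  intro u hu
  exact h_nonneg k (Set.mem_of_mem_of_subset hu (Set.Icc_subset_Icc le_rfl hθ.2))

lemma h2_le (k : ℕ) {θ : ℝ} (hθ : θ ∈ Set.Icc 0 (π/6)) :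
    h2 k θ ≤ θ^3/6 * (1/2)^(2*k+1) := by
  have key : h2 k θ ≤ ∫ u in (0:ℝ)..θ, u^2/2 * ((1:ℝ)/2)^(2*k+1) := by
    apply intervalIntegral.integral_mono_on hθ.1
      ((h_cont k).intervalIntegrable 0 θ)
      ((((continuous_pow 2).div_const 2).mul continuous_const).intervalIntegrable 0 θ)
    intro x hx
    exact h_le k (Set.mem_of_mem_of_subset hx (Set.Icc_subset_Icc le_rfl hθ.2))
  have : ∫ u in (0:ℝ)..θ, u^2/2 * ((1:ℝ)/2)^(2*k+1)
      = (∫ u in (0:ℝ)..θ, u^2) * (((1:ℝ)/2)^(2*k+1) / 2) := by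
    rw [← intervalIntegral.integral_mul_const]
    congr 1
    ext u
    ring
  rw [this, integral_pow] at key
  calc h2 k θ ≤ _ := key
    _ = θ^3/6 * (1/2)^(2*k+1) := by norm_num; ring

lemma h3_nonneg (k : ℕ) {θ : ℝ} (hθ : θ ∈ Set.Icc 0 (π/6)) : 0 ≤ h3 k θ := by
  apply intervalIntegral.integral_nonneg hθ.1
  intro u hu
  exact h2_nonneg k (Set.mem_of_mem_of_subset hu (Set.Icc_subset_Icc le_rfl hθ.2))

lemma h3_le (k : ℕ) {θ : ℝ} (hθ : θ ∈ Set.Icc 0 (π/6)) :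
    h3 k θ ≤ θ^4/24 * (1/2)^(2*k+1) := by
  have key : h3 k θ ≤ ∫ u in (0:ℝ)..θ, u^3/6 * ((1:ℝ)/2)^(2*k+1) := by
    apply intervalIntegral.integral_mono_on hθ.1
      ((h2_cont k).intervalIntegrable 0 θ)
      ((((continuous_pow 3).div_const 6).mul continuous_const).intervalIntegrable 0 θ)
    intro x hx
    exact h2_le k (Set.mem_of_mem_of_subset hx (Set.Icc_subset_Icc le_rfl hθ.2))
  have : ∫ u in (0:ℝ)..θ, u^3/6 * ((1:ℝ)/2)^(2*k+1)
      = (∫ u in (0:ℝ)..θ, u^3) * (((1:ℝ)/2)^(2*k+1) / 6) := by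
    rw [← intervalIntegral.integral_mul_const]
    congr 1
    ext u
    ring
  rw [this, integral_pow] at key
  calc h3 k θ ≤ _ := key
    _ = θ^4/24 * (1/2)^(2*k+1) := by norm_num; ring


lemma aux_tendsto : Tendsto (fun k : ℕ => (2*(k:ℝ)+1)^2 * ((1:ℝ)/2)^(2*k+1)) atTop (𝓝 0) := by
  have h1 : Tendsto (fun n : ℕ => (n:ℝ)^2 / 2^n) atTop (𝓝 0) :=
    tendsto_pow_const_div_const_pow_of_one_lt 2 one_lt_two
  have h2 : Tendsto (fun k : ℕ => 2*k+1) atTop atTop :=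
    (strictMono_nat_of_lt_succ (fun n => by omega)).tendsto_atTop
  have h3 := h1.comp h2
  convert h3 using 2 with k
  simp only [Function.comp]
  push_cast
  rw [div_pow, one_pow]
  ring

lemma rem_tendsto {R : ℕ → ℝ} (C : ℝ) (hC : 0 ≤ C) (h0 : ∀ k, 0 ≤ R k)
    (hb : ∀ k, R k ≤ (2*(k:ℝ)+1)^2 * t k * (C * ((1:ℝ)/2)^(2*k+1))) :
    Tendsto R atTop (𝓝 0) := by
  have hb2 : ∀ k, R k ≤ C * ((2*(k:ℝ)+1)^2 * ((1:ℝ)/2)^(2*k+1)) := by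
    intro k
    have h1 := t_le_one k
    have h2 := (t_pos k).le
    have h3 : (0:ℝ) ≤ (2*(k:ℝ)+1)^2 * (C * ((1:ℝ)/2)^(2*k+1)) := by positivity
    nlinarith [hb k]
  have htend : Tendsto (fun k : ℕ => C * ((2*(k:ℝ)+1)^2 * ((1:ℝ)/2)^(2*k+1))) atTop (𝓝 0) := by
    have := aux_tendsto.const_mul C
    simpa using this
  exact squeeze_zero h0 hb2 htend

lemma pi6_mem : π/6 ∈ Set.Icc (0:ℝ) (π/6) := ⟨by linarith [Real.pi_pos], le_rfl⟩

noncomputable def u (k : ℕ) : ℝ := t k * ((1:ℝ)/2)^(2*k+1)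
noncomputable def v (k : ℕ) : ℝ := t k * h k (π/6)

lemma partial_u (k : ℕ) :
    ∑ m ∈ Finset.range (k+1), u m = π/6 - (2*(k:ℝ)+1)^2 * t k * h k (π/6) := by
  have hs := star1 k (π/6)
  rw [Real.sin_pi_div_six] at hs
  simp only [u]
  linarith

lemma partial_v (k : ℕ) :
    ∑ m ∈ Finset.range (k+1), v m = (π/6)^3/6 - (2*(k:ℝ)+1)^2 * t k * h3 k (π/6) := by
  have hs := star3 k (π/6)
  simp only [v]
  linarith

lemma hasSum_u : HasSum u (π/6) := by
  have hsummable : Summable u := by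
    apply Summable.of_nonneg_of_le (fun k => mul_nonneg (t_pos k).le (by positivity))
      (fun k => ?_) (summable_geometric_of_lt_one (by norm_num) (by norm_num : (1:ℝ)/2 < 1))
    calc u k ≤ 1 * ((1:ℝ)/2)^(2*k+1) := by
          have h1 := t_le_one k
          have h2 : (0:ℝ) ≤ ((1:ℝ)/2)^(2*k+1) := by positivity
          simp only [u]
          nlinarith
      _ ≤ ((1:ℝ)/2)^k := by
          rw [one_mul]
          exact pow_le_pow_of_le_one (by norm_num) (by norm_num) (by omega)
  have htends : Tendsto (fun n => ∑ m ∈ Finset.range n, u m) atTop (𝓝 (π/6)) := by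
    rw [← Filter.tendsto_add_atTop_iff_nat 1]
    have heq : (fun n => ∑ m ∈ Finset.range (n+1), u m)
        = fun n : ℕ => π/6 - (2*(n:ℝ)+1)^2 * t n * h n (π/6) := funext partial_u
    rw [heq]
    have hrem : Tendsto (fun n : ℕ => (2*(n:ℝ)+1)^2 * t n * h n (π/6)) atTop (𝓝 0) := by
      apply rem_tendsto ((π/6)^2/2) (by positivity)
      · intro k
        have := h_nonneg k pi6_mem
        have := (t_pos k).le
        positivity
      · intro k
        have hb := h_le k pi6_mem
        have h1 := (t_pos k).le
        exact mul_le_mul_of_nonneg_left hb (mul_nonneg (by positivity) h1)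
    have := tendsto_const_nhds (x := π/6) (f := atTop (α := ℕ)).sub hrem
    simpa using this
  have heq : ∑' k, u k = π/6 :=
    tendsto_nhds_unique hsummable.hasSum.tendsto_sum_nat htends
  exact heq ▸ hsummable.hasSum

lemma hasSum_v : HasSum v ((π/6)^3/6) := by
  have hsummable : Summable v := by
    apply Summable.of_nonneg_of_le
      (fun k => mul_nonneg (t_pos k).le (h_nonneg k pi6_mem))
      (fun k => ?_)
      ((summable_geometric_of_lt_one (by norm_num) (by norm_num : (1:ℝ)/2 < 1)).mul_left ((π/6)^2/2))
    calc v k ≤ 1 * ((π/6)^2/2 * ((1:ℝ)/2)^(2*k+1)) := by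
          have h1 := t_le_one k
          have h2 := (t_pos k).le
          have h3 := h_le k pi6_mem
          have h4 := h_nonneg k pi6_mem
          have h5 : (0:ℝ) ≤ (π/6)^2/2 * ((1:ℝ)/2)^(2*k+1) := by positivity
          simp only [v]
          nlinarith
      _ ≤ (π/6)^2/2 * ((1:ℝ)/2)^k := by
          rw [one_mul]
          have : ((1:ℝ)/2)^(2*k+1) ≤ ((1:ℝ)/2)^k :=
            pow_le_pow_of_le_one (by norm_num) (by norm_num) (by omega)
          have hp : (0:ℝ) ≤ (π/6)^2/2 := by positivity
          nlinarith
  have htends : Tendsto (fun n => ∑ m ∈ Finset.range n, v m) atTop (𝓝 ((π/6)^3/6)) := by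
    rw [← Filter.tendsto_add_atTop_iff_nat 1]
    have heq : (fun n => ∑ m ∈ Finset.range (n+1), v m)
        = fun n : ℕ => (π/6)^3/6 - (2*(n:ℝ)+1)^2 * t n * h3 n (π/6) := funext partial_v
    rw [heq]
    have hrem : Tendsto (fun n : ℕ => (2*(n:ℝ)+1)^2 * t n * h3 n (π/6)) atTop (𝓝 0) := by
      apply rem_tendsto ((π/6)^4/24) (by positivity)
      · intro k
        have := h3_nonneg k pi6_mem
        have := (t_pos k).le
        positivity
      · intro k
        have hb := h3_le k pi6_mem
        have h1 := (t_pos k).le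
        exact mul_le_mul_of_nonneg_left hb (mul_nonneg (by positivity) h1)
    have := tendsto_const_nhds (x := (π/6)^3/6) (f := atTop (α := ℕ)).sub hrem
    simpa using this
  have heq : ∑' k, v k = (π/6)^3/6 :=
    tendsto_nhds_unique hsummable.hasSum.tendsto_sum_nat htends
  exact heq ▸ hsummable.hasSum


noncomputable def codd (m : ℕ) : ℝ := ∑ j ∈ Finset.range m, 1/(2*(j:ℝ)+1)^2

noncomputable def f (p : ℕ × ℕ) : ℝ := if p.1 < p.2 then u p.2 / (2*(p.1:ℝ)+1)^2 else 0

lemma u_nonneg (k : ℕ) : 0 ≤ u k := mul_nonneg (t_pos k).le (by positivity)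

lemma f_nonneg : 0 ≤ f := by
  intro p
  simp only [Pi.zero_apply, f]
  split
  · exact div_nonneg (u_nonneg p.2) (by positivity)
  · exact le_rfl

lemma fib1 (k : ℕ) : HasSum (fun m => f (k, m)) (v k) := by
  have htail : HasSum (fun m => u (m + (k+1))) (π/6 - ∑ m ∈ Finset.range (k+1), u m) := by
    apply (hasSum_nat_add_iff (k+1)).mpr
    rw [sub_add_cancel]
    exact hasSum_u
  have hdiv := htail.div_const ((2*(k:ℝ)+1)^2)
  have hi : Function.Injective (fun m : ℕ => m + (k+1)) := fun a b hab => by simpa using hab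
  have hzero : ∀ m ∉ Set.range (fun m : ℕ => m + (k+1)), f (k, m) = 0 := by
    intro m hm
    have : m < k + 1 := by
      by_contra hc
      exact hm ⟨m - (k+1), show m - (k+1) + (k+1) = m from by omega⟩
    simp only [f]
    rw [if_neg (by omega)]
  have hcomp : ((fun m => f (k, m)) ∘ (fun m : ℕ => m + (k+1)))
      = fun m => u (m + (k+1)) / (2*(k:ℝ)+1)^2 := by
    funext m
    simp only [Function.comp, f]
    rw [if_pos (by omega)]
  have := (Function.Injective.hasSum_iff hi hzero).mp (by rw [hcomp] at *; exact hdiv)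
  convert this using 1
  have hp := partial_u k
  have hne : ((2*(k:ℝ)+1)^2) ≠ 0 := by positivity
  rw [eq_div_iff hne, hp]
  simp only [v]
  ring

lemma fib2 (m : ℕ) : HasSum (fun k => f (k, m)) (u m * codd m) := by
  have hzero : ∀ k ∉ Finset.range m, f (k, m) = 0 := by
    intro k hk
    simp only [Finset.mem_range] at hk
    simp only [f]
    rw [if_neg (by omega)]
  have : HasSum (fun k => f (k, m)) _ := hasSum_sum_of_ne_finset_zero hzero
  convert this using 1
  rw [codd, Finset.mul_sum]
  apply Finset.sum_congr rfl
  intro k hk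
  simp only [f]
  rw [if_pos (Finset.mem_range.mp hk), mul_one_div, div_eq_div_iff (by positivity) (by positivity)]

lemma summable_f : Summable f := by
  rw [summable_prod_of_nonneg f_nonneg]
  refine ⟨fun k => (fib1 k).summable, ?_⟩
  have : (fun k => ∑' m, f (k, m)) = v := funext fun k => (fib1 k).tsum_eq
  rw [this]
  exact hasSum_v.summable

lemma hasSum_f : HasSum f ((π/6)^3/6) := by
  have h1 := summable_f.hasSum
  have h2 : HasSum v (∑' p, f p) := h1.prod_fiberwise fib1
  rwa [h2.unique hasSum_v] at h1

lemma hasSum_ucodd : HasSum (fun m => u m * codd m) ((π/6)^3/6) := by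
  have hswap : HasSum (f ∘ (Equiv.prodComm ℕ ℕ)) ((π/6)^3/6) :=
    ((Equiv.prodComm ℕ ℕ).hasSum_iff).mpr hasSum_f
  exact hswap.prod_fiberwise fun m => fib2 m

lemma Hid (k : ℕ) :
    (∑ j ∈ Finset.Icc 1 (2*k), (1:ℝ)/(j:ℝ)^2)
      - (1/4) * ∑ j ∈ Finset.Icc 1 k, (1:ℝ)/(j:ℝ)^2 = codd k := by
  induction k with
  | zero => simp [codd]
  | succ k ih =>
    rw [codd, Finset.sum_range_succ, ← codd,
      show 2*(k+1) = (2*k+1)+1 by ring,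
      Finset.sum_Icc_succ_top (by omega : 1 ≤ (2*k+1)+1),
      show (2*k+1) = (2*k)+1 by ring,
      Finset.sum_Icc_succ_top (by omega : 1 ≤ (2*k)+1),
      Finset.sum_Icc_succ_top (by omega : 1 ≤ k+1)]
    push_cast
    have e : (1:ℝ)/((2*(k:ℝ)+2))^2 = (1/4)*(1/((k:ℝ)+1)^2) := by
      field_simp
      ring
    linear_combination ih + e
end SCB

theorem sum_central_binom_harmonic2_16 :
    ∑' k : ℕ,
        (Nat.choose (2 * k) k : ℝ) / ((2 * (k : ℝ) + 1) * 16 ^ k) *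
          ((∑ j ∈ Finset.Icc 1 (2 * k), (1 : ℝ) / (j : ℝ) ^ 2) -
            (1 / 4) * ∑ j ∈ Finset.Icc 1 k, (1 : ℝ) / (j : ℝ) ^ 2) =
      Real.pi ^ 3 / 648 := by
  have key : HasSum (fun m => 2 * (SCB.u m * SCB.codd m)) (Real.pi^3/648) := by
    have := SCB.hasSum_ucodd.mul_left 2
    rw [show Real.pi^3/648 = 2*((π/6)^3/6) by ring]
    exact this
  have hterm : ∀ k : ℕ,
      (Nat.choose (2 * k) k : ℝ) / ((2 * (k : ℝ) + 1) * 16 ^ k) *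
          ((∑ j ∈ Finset.Icc 1 (2 * k), (1 : ℝ) / (j : ℝ) ^ 2) -
            (1 / 4) * ∑ j ∈ Finset.Icc 1 k, (1 : ℝ) / (j : ℝ) ^ 2)
        = 2 * (SCB.u k * SCB.codd k) := by
    intro k
    rw [SCB.Hid k]
    have hc : (Nat.choose (2 * k) k : ℝ) / ((2 * (k : ℝ) + 1) * 16 ^ k) = 2 * SCB.u k := by
      simp only [SCB.u, SCB.t]
      rw [div_pow, one_pow,
        show (16:ℝ)^k = 4^k * 4^k from by rw [← mul_pow]; norm_num,
        show (2:ℝ)^(2*k+1) = 2 * 4^k from by rw [pow_succ, pow_mul]; norm_num [mul_comm]]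
      have h1 : (2*(k:ℝ)+1) ≠ 0 := by positivity
      have h2 : (4:ℝ)^k ≠ 0 := by positivity
      field_simp
    rw [hc]
    ring
  calc ∑' (k : ℕ), (Nat.choose (2 * k) k : ℝ) / ((2 * (k : ℝ) + 1) * 16 ^ k) *
          ((∑ j ∈ Finset.Icc 1 (2 * k), (1 : ℝ) / (j : ℝ) ^ 2) -
            (1 / 4) * ∑ j ∈ Finset.Icc 1 k, (1 : ℝ) / (j : ℝ) ^ 2)
      = ∑' (k : ℕ), 2 * (SCB.u k * SCB.codd k) := tsum_congr hterm
    _ = Real.pi ^ 3 / 648 := key.tsum_eq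
end

section
/- \sum_{k=0}^\infty binom(2k,k) / ((2k+1) 8^k) * (H_{2k}^{(2)} - (1/4) H_k^{(2)}) = sqrt(2) \pi^3 / 384. -/
open Real Finset

noncomputable def bb (k : ℕ) : ℝ := (Nat.choose (2*k) k : ℝ) / 4^k
noncomputable def cc (k : ℕ) : ℝ := bb k / (2*(k:ℝ)+1)
noncomputable def OO (k : ℕ) : ℝ := ∑ j ∈ Finset.range k, (1:ℝ)/(2*(j:ℝ)+1)^2
noncomputable def BB (k : ℕ) : ℝ := cc k * OO k

lemma bb_pos (k : ℕ) : 0 < bb k := by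
  have h : 0 < Nat.choose (2*k) k := Nat.choose_pos (by omega)
  have h' : (0:ℝ) < (Nat.choose (2*k) k : ℝ) := by exact_mod_cast h
  exact div_pos h' (by positivity)

lemma bb_ratio (k : ℕ) : (2*(k:ℝ)+2) * bb (k+1) = (2*(k:ℝ)+1) * bb k := by
  have h := Nat.succ_mul_centralBinom_succ k
  unfold Nat.centralBinom at h
  have h' : ((k:ℝ)+1) * (Nat.choose (2*(k+1)) (k+1) : ℝ)
      = 2 * (2*(k:ℝ)+1) * (Nat.choose (2*k) k : ℝ) := by exact_mod_cast congrArg (Nat.cast : ℕ → ℝ) h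
  unfold bb
  have h4 : (0:ℝ) < 4^k := by positivity
  field_simp
  linear_combination (2*(4:ℝ)^k) * h'

lemma bb_le_one (k : ℕ) : bb k ≤ 1 := by
  induction k with
  | zero => simp [bb]
  | succ n ih =>
    have hr := bb_ratio n
    have hp := bb_pos n
    nlinarith

lemma OO_nonneg (k : ℕ) : 0 ≤ OO k := by
  unfold OO; positivity

lemma OO_succ (k : ℕ) : OO (k+1) = OO k + 1/(2*(k:ℝ)+1)^2 := by
  unfold OO; rw [Finset.sum_range_succ]

lemma OO_le (k : ℕ) : OO k ≤ 2 - 2/((k:ℝ)+1) := by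
  induction k with
  | zero => simp [OO]
  | succ n ih =>
    rw [OO_succ]
    have h1 : (0:ℝ) < (n:ℝ)+1 := by positivity
    have h2 : (0:ℝ) < (n:ℝ)+1+1 := by positivity
    have h3 : (0:ℝ) < (2*(n:ℝ)+1)^2 := by positivity
    have key : 1/(2*(n:ℝ)+1)^2 ≤ 2/((n:ℝ)+1) - 2/((n:ℝ)+1+1) := by
      rw [div_sub_div _ _ (ne_of_gt h1) (ne_of_gt h2), div_le_div_iff₀ h3 (by positivity)]
      nlinarith
    push_cast
    linarith

lemma OO_le_two (k : ℕ) : OO k ≤ 2 := by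
  have h1 : (0:ℝ) < (k:ℝ)+1 := by positivity
  have h2 : 0 ≤ 2/((k:ℝ)+1) := by positivity
  linarith [OO_le k]

lemma cc_nonneg (k : ℕ) : 0 ≤ cc k := by
  unfold cc
  have := (bb_pos k).le
  positivity

lemma cc_le_one (k : ℕ) : cc k ≤ 1 := by
  unfold cc
  rw [div_le_one (by positivity)]
  nlinarith [bb_le_one k, (Nat.cast_nonneg k : (0:ℝ) ≤ k)]

lemma BB_abs_le (k : ℕ) : |BB k| ≤ 2 := by
  unfold BB
  rw [abs_of_nonneg (mul_nonneg (cc_nonneg k) (OO_nonneg k))]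
  nlinarith [cc_le_one k, cc_nonneg k, OO_nonneg k, OO_le_two k]

lemma cc_abs_le (k : ℕ) : |cc k| ≤ 2 := by
  rw [abs_of_nonneg (cc_nonneg k)]
  nlinarith [cc_le_one k]

lemma cc_rec (k : ℕ) : (2*(k:ℝ)+3)*(2*(k:ℝ)+2)*cc (k+1) = (2*(k:ℝ)+1)^2 * cc k := by
  have hr := bb_ratio k
  unfold cc
  push_cast
  have h1 : (2*(k:ℝ)+1) ≠ 0 := by positivity
  have h2 : (2*(k:ℝ)+3) ≠ 0 := by positivity
  field_simp
  linear_combination (2*(k:ℝ)+3) * hr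

lemma BB_rec (k : ℕ) : (2*(k:ℝ)+3)*(2*(k:ℝ)+2)*BB (k+1) - (2*(k:ℝ)+1)^2 * BB k = cc k := by
  unfold BB
  rw [OO_succ]
  have h := cc_rec k
  have h3 : ((2*(k:ℝ)+1)^2) ≠ 0 := by positivity
  have hcc : (2*(k:ℝ)+3)*(2*(k:ℝ)+2)*cc (k+1) * (OO k + 1/(2*(k:ℝ)+1)^2)
      = (2*(k:ℝ)+1)^2 * cc k * (OO k + 1/(2*(k:ℝ)+1)^2) := by rw [h]
  calc (2*(k:ℝ)+3)*(2*(k:ℝ)+2)*(cc (k+1) * (OO k + 1/(2*(k:ℝ)+1)^2)) - (2*(k:ℝ)+1)^2 * (cc k * OO k)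
      = (2*(k:ℝ)+1)^2 * cc k * (OO k + 1/(2*(k:ℝ)+1)^2) - (2*(k:ℝ)+1)^2 * (cc k * OO k) := by
        rw [← hcc]; ring
    _ = cc k := by field_simp; ring

-- Summability machinery
lemma summable_master {r : ℝ} (hr0 : 0 ≤ r) (hr1 : r < 1) (C : ℝ) :
    Summable (fun k : ℕ => C * (2*(k:ℝ)+4)^2 * r^k) := by
  have hr : ‖r‖ < 1 := by rwa [Real.norm_eq_abs, abs_of_nonneg hr0]
  have h2 := (summable_pow_mul_geometric_of_norm_lt_one 2 hr).mul_left (4*C)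
  have h1 := (summable_pow_mul_geometric_of_norm_lt_one 1 hr).mul_left (16*C)
  have h0 := (summable_pow_mul_geometric_of_norm_lt_one 0 hr).mul_left (16*C)
  refine ((h2.add h1).add h0).congr fun k => ?_
  push_cast
  ring

lemma term_bound {C r y : ℝ} (hC : 0 ≤ C) (hr1 : r ≤ 1) (hyr : |y| ≤ r)
    {k e : ℕ} (he : k ≤ e) {co v : ℝ} (hco0 : 0 ≤ co) (hco : co ≤ (2*(k:ℝ)+4)^2)
    (hv : |v| ≤ C) : |co * v * y^e| ≤ C * (2*(k:ℝ)+4)^2 * r^k := by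
  have hr0 : 0 ≤ r := le_trans (abs_nonneg y) hyr
  rw [abs_mul, abs_mul, abs_of_nonneg hco0, abs_pow]
  have hy1 : |y|^e ≤ r^e := pow_le_pow_left₀ (abs_nonneg y) hyr e
  have hy2 : r^e ≤ r^k := pow_le_pow_of_le_one hr0 hr1 he
  have h1 : |v| * |y|^e ≤ C * r^k :=
    mul_le_mul hv (le_trans hy1 hy2) (pow_nonneg (abs_nonneg y) e) hC
  calc co * |v| * |y|^e = co * (|v| * |y|^e) := by ring
    _ ≤ (2*(k:ℝ)+4)^2 * (C*r^k) :=
        mul_le_mul hco h1 (mul_nonneg (abs_nonneg v) (pow_nonneg (abs_nonneg y) e)) (by positivity)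
    _ = C * (2*(k:ℝ)+4)^2 * r^k := by ring

lemma summable_of_le_master (u : ℕ → ℝ) {C r : ℝ} (hr0 : 0 ≤ r) (hr1 : r < 1)
    (hb : ∀ k, |u k| ≤ C * (2*(k:ℝ)+4)^2 * r^k) : Summable u :=
  Summable.of_norm_bounded (summable_master hr0 hr1 C) (by simpa [Real.norm_eq_abs] using hb)

noncomputable def FF (a : ℕ → ℝ) (x : ℝ) : ℝ := ∑' k, a k * x^(2*k+1)
noncomputable def F1 (a : ℕ → ℝ) (x : ℝ) : ℝ := ∑' k : ℕ, (2*(k:ℝ)+1) * a k * x^(2*k)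
noncomputable def F2 (a : ℕ → ℝ) (x : ℝ) : ℝ := ∑' k : ℕ, (2*(k:ℝ)+1) * (2*(k:ℝ)) * a k * x^(2*k-1)

section series
variable {a : ℕ → ℝ} {C : ℝ} (hC : 0 ≤ C) (ha : ∀ k, |a k| ≤ C)

include hC ha in
lemma summable_FF {x : ℝ} (hx : |x| < 1) : Summable (fun k => a k * x^(2*k+1)) := by
  refine summable_of_le_master (C := C) _ (abs_nonneg x) hx (fun k => ?_)
  have := term_bound (C := C) (r := |x|) (y := x) hC hx.le (le_refl _)
    (k := k) (e := 2*k+1) (he := by omega) (co := 1) (v := a k)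
    (hco0 := by norm_num) (hco := by nlinarith [(Nat.cast_nonneg k : (0:ℝ) ≤ k)]) (hv := ha k)
  simpa using this

include hC ha in
lemma summable_F1 {x : ℝ} (hx : |x| < 1) :
    Summable (fun k : ℕ => (2*(k:ℝ)+1) * a k * x^(2*k)) := by
  refine summable_of_le_master (C := C) _ (abs_nonneg x) hx (fun k => ?_)
  exact term_bound (C := C) (r := |x|) (y := x) hC hx.le (le_refl _)
    (k := k) (e := 2*k) (he := by omega) (co := 2*(k:ℝ)+1) (v := a k)
    (hco0 := by positivity) (hco := by nlinarith [(Nat.cast_nonneg k : (0:ℝ) ≤ k)]) (hv := ha k)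

include hC ha in
lemma summable_F2 {x : ℝ} (hx : |x| < 1) :
    Summable (fun k : ℕ => (2*(k:ℝ)+1) * (2*(k:ℝ)) * a k * x^(2*k-1)) := by
  refine summable_of_le_master (C := C) _ (abs_nonneg x) hx (fun k => ?_)
  have := term_bound (C := C) (r := |x|) (y := x) hC hx.le (le_refl _)
    (k := k) (e := 2*k-1) (he := by omega) (co := (2*(k:ℝ)+1)*(2*(k:ℝ))) (v := a k)
    (hco0 := by positivity) (hco := by nlinarith [(Nat.cast_nonneg k : (0:ℝ) ≤ k)]) (hv := ha k)
  simpa [mul_assoc] using this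

include hC ha in
lemma summable_Fu {x : ℝ} (hx : |x| < 1) :
    Summable (fun k : ℕ => (2*(k:ℝ)+3) * (2*(k:ℝ)+2) * a (k+1) * x^(2*k+1)) := by
  refine summable_of_le_master (C := C) _ (abs_nonneg x) hx (fun k => ?_)
  have := term_bound (C := C) (r := |x|) (y := x) hC hx.le (le_refl _)
    (k := k) (e := 2*k+1) (he := by omega) (co := (2*(k:ℝ)+3)*(2*(k:ℝ)+2)) (v := a (k+1))
    (hco0 := by positivity) (hco := by nlinarith [(Nat.cast_nonneg k : (0:ℝ) ≤ k)]) (hv := ha (k+1))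
  simpa [mul_assoc] using this

include hC ha in
lemma summable_Fw {x : ℝ} (hx : |x| < 1) :
    Summable (fun k : ℕ => (2*(k:ℝ)+1) * (2*(k:ℝ)) * a k * x^(2*k+1)) := by
  refine summable_of_le_master (C := C) _ (abs_nonneg x) hx (fun k => ?_)
  have := term_bound (C := C) (r := |x|) (y := x) hC hx.le (le_refl _)
    (k := k) (e := 2*k+1) (he := by omega) (co := (2*(k:ℝ)+1)*(2*(k:ℝ))) (v := a k)
    (hco0 := by positivity) (hco := by nlinarith [(Nat.cast_nonneg k : (0:ℝ) ≤ k)]) (hv := ha k)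
  simpa [mul_assoc] using this

include hC ha in
lemma summable_Fv {x : ℝ} (hx : |x| < 1) :
    Summable (fun k : ℕ => (2*(k:ℝ)+1) * a k * x^(2*k+1)) := by
  refine summable_of_le_master (C := C) _ (abs_nonneg x) hx (fun k => ?_)
  exact term_bound (C := C) (r := |x|) (y := x) hC hx.le (le_refl _)
    (k := k) (e := 2*k+1) (he := by omega) (co := 2*(k:ℝ)+1) (v := a k)
    (hco0 := by positivity) (hco := by nlinarith [(Nat.cast_nonneg k : (0:ℝ) ≤ k)]) (hv := ha k)

end series

section deriv
variable {a : ℕ → ℝ} {C : ℝ} (hC : 0 ≤ C) (ha : ∀ k, |a k| ≤ C)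

include hC ha in
lemma hasDerivAt_FF {x : ℝ} (hx : |x| < 1) : HasDerivAt (FF a) (F1 a x) x := by
  set r : ℝ := (1+|x|)/2 with hr
  have hxa : 0 ≤ |x| := abs_nonneg x
  have hr0 : (0:ℝ) < r := by rw [hr]; positivity
  have hr1 : r < 1 := by rw [hr]; linarith
  have hxr : |x| < r := by rw [hr]; linarith
  have hxmem : x ∈ Set.Ioo (-r) r := by
    have := abs_lt.mp hxr; exact ⟨this.1, this.2⟩
  show HasDerivAt (fun z => ∑' k : ℕ, a k * z^(2*k+1))
      (∑' k : ℕ, (2*(k:ℝ)+1) * a k * x^(2*k)) x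
  refine hasDerivAt_tsum_of_isPreconnected
    (u := fun k : ℕ => C * (2*(k:ℝ)+4)^2 * r^k)
    (g := fun k z => a k * z^(2*k+1))
    (g' := fun k y => (2*(k:ℝ)+1) * a k * y^(2*k))
    (y₀ := 0)
    (summable_master hr0.le hr1 C) isOpen_Ioo isPreconnected_Ioo
    (fun n y _ => ?_) (fun n y hy => ?_) ⟨by linarith, by linarith⟩ ?_ hxmem
  · have h := (hasDerivAt_pow (2*n+1) y).const_mul (a n)
    refine h.congr_deriv ?_
    simp only [Nat.add_sub_cancel]
    push_cast
    ring
  · rw [Real.norm_eq_abs]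
    have hyr : |y| ≤ r := (abs_lt.mpr ⟨hy.1, hy.2⟩).le
    exact term_bound (C := C) (r := r) (y := y) hC hr1.le hyr
      (k := n) (e := 2*n) (he := by omega) (co := 2*(n:ℝ)+1) (v := a n)
      (hco0 := by positivity) (hco := by nlinarith [(Nat.cast_nonneg n : (0:ℝ) ≤ n)]) (hv := ha n)
  · have : (fun n => a n * (0:ℝ)^(2*n+1)) = fun _ => (0:ℝ) := by
      funext n; simp
    rw [this]; exact summable_zero

include hC ha in
lemma hasDerivAt_F1 {x : ℝ} (hx : |x| < 1) : HasDerivAt (F1 a) (F2 a x) x := by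
  set r : ℝ := (1+|x|)/2 with hr
  have hxa : 0 ≤ |x| := abs_nonneg x
  have hr0 : (0:ℝ) < r := by rw [hr]; positivity
  have hr1 : r < 1 := by rw [hr]; linarith
  have hxr : |x| < r := by rw [hr]; linarith
  have hxmem : x ∈ Set.Ioo (-r) r := by
    have := abs_lt.mp hxr; exact ⟨this.1, this.2⟩
  show HasDerivAt (fun z => ∑' k : ℕ, (2*(k:ℝ)+1) * a k * z^(2*k))
      (∑' k : ℕ, (2*(k:ℝ)+1) * (2*(k:ℝ)) * a k * x^(2*k-1)) x
  refine hasDerivAt_tsum_of_isPreconnected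
    (u := fun k : ℕ => C * (2*(k:ℝ)+4)^2 * r^k)
    (g := fun k z => (2*(k:ℝ)+1) * a k * z^(2*k))
    (g' := fun k y => (2*(k:ℝ)+1) * (2*(k:ℝ)) * a k * y^(2*k-1))
    (y₀ := 0)
    (summable_master hr0.le hr1 C) isOpen_Ioo isPreconnected_Ioo
    (fun n y _ => ?_) (fun n y hy => ?_) ⟨by linarith, by linarith⟩ ?_ hxmem
  · have h := (hasDerivAt_pow (2*n) y).const_mul ((2*(n:ℝ)+1) * a n)
    refine h.congr_deriv ?_
    push_cast
    ring
  · rw [Real.norm_eq_abs]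
    have hyr : |y| ≤ r := (abs_lt.mpr ⟨hy.1, hy.2⟩).le
    have := term_bound (C := C) (r := r) (y := y) hC hr1.le hyr
      (k := n) (e := 2*n-1) (he := by omega) (co := (2*(n:ℝ)+1)*(2*(n:ℝ))) (v := a n)
      (hco0 := by positivity) (hco := by nlinarith [(Nat.cast_nonneg n : (0:ℝ) ≤ n)]) (hv := ha n)
    simpa [mul_assoc] using this
  · refine summable_of_ne_finset_zero (s := {0}) (fun n hn => ?_)
    have hn0 : n ≠ 0 := by simpa using hn
    have : (0:ℝ)^(2*n) = 0 := zero_pow (by omega)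
    simp [this]

include hC ha in
lemma comb {x : ℝ} (hx : |x| < 1) :
    (1 - x^2) * F2 a x - x * F1 a x
      = ∑' k : ℕ, ((2*(k:ℝ)+3)*(2*(k:ℝ)+2)*a (k+1) - (2*(k:ℝ)+1)^2 * a k) * x^(2*k+1) := by
  have hS2 := summable_F2 hC ha hx
  have hSu := summable_Fu hC ha hx
  have hSw := summable_Fw hC ha hx
  have hSv := summable_Fv hC ha hx
  have step1 : F2 a x = ∑' k : ℕ, (2*(k:ℝ)+3) * (2*(k:ℝ)+2) * a (k+1) * x^(2*k+1) := by
    rw [F2, hS2.tsum_eq_zero_add]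
    have h0 : (2*((0:ℕ):ℝ)+1) * (2*((0:ℕ):ℝ)) * a 0 * x^(2*0-1) = 0 := by norm_num
    rw [h0, zero_add]
    refine tsum_congr fun k => ?_
    have he : 2*(k+1)-1 = 2*k+1 := by omega
    rw [he]
    push_cast
    ring
  have step2 : x^2 * F2 a x = ∑' k : ℕ, (2*(k:ℝ)+1) * (2*(k:ℝ)) * a k * x^(2*k+1) := by
    rw [step1, ← tsum_mul_left, hSw.tsum_eq_zero_add]
    have h0 : (2*((0:ℕ):ℝ)+1) * (2*((0:ℕ):ℝ)) * a 0 * x^(2*0+1) = 0 := by norm_num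
    rw [h0, zero_add]
    refine tsum_congr fun k => ?_
    push_cast
    ring
  have step3 : x * F1 a x = ∑' k : ℕ, (2*(k:ℝ)+1) * a k * x^(2*k+1) := by
    rw [F1, ← tsum_mul_left]
    refine tsum_congr fun k => ?_
    ring
  have expand : (1 - x^2) * F2 a x - x * F1 a x
      = F2 a x - (x^2 * F2 a x + x * F1 a x) := by ring
  rw [expand, step2, step3, step1, ← hSw.tsum_add hSv, ← hSu.tsum_sub (hSw.add hSv)]
  refine tsum_congr fun k => ?_
  ring

end deriv

lemma FF_zero (a : ℕ → ℝ) : FF a 0 = 0 := by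
  rw [FF]
  convert tsum_zero with k
  simp

lemma F1_zero (a : ℕ → ℝ) : F1 a 0 = a 0 := by
  rw [F1, tsum_eq_single 0 (fun n hn => ?_)]
  · norm_num
  · have : (0:ℝ)^(2*n) = 0 := zero_pow (by omega)
    simp [this]

lemma keyP {x : ℝ} (hx : |x| < 1) : (1 - x^2) * F2 cc x - x * F1 cc x = 0 := by
  rw [comb (by norm_num : (0:ℝ) ≤ 2) cc_abs_le hx]
  have h : ∀ k : ℕ, ((2*(k:ℝ)+3)*(2*(k:ℝ)+2)*cc (k+1) - (2*(k:ℝ)+1)^2 * cc k) * x^(2*k+1)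
      = 0 := by
    intro k
    rw [cc_rec k]
    ring
  rw [tsum_congr h, tsum_zero]

lemma keyR {x : ℝ} (hx : |x| < 1) : (1 - x^2) * F2 BB x - x * F1 BB x = FF cc x := by
  rw [comb (by norm_num : (0:ℝ) ≤ 2) BB_abs_le hx, FF]
  refine tsum_congr fun k => ?_
  have h := BB_rec k
  rw [h]

lemma const_of_hasDerivAt_zero {f : ℝ → ℝ} {s : Set ℝ} (hs : Convex ℝ s)
    (hf : ∀ x ∈ s, HasDerivAt f 0 x) {x y : ℝ} (hx : x ∈ s) (hy : y ∈ s) : f x = f y := by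
  have h := Convex.norm_image_sub_le_of_norm_hasDerivWithin_le (C := 0)
    (f' := fun _ => (0:ℝ)) (fun z hz => (hf z hz).hasDerivWithinAt)
    (fun z _ => by simp) hs hx hy
  rw [zero_mul] at h
  have := norm_le_zero_iff.mp h
  linarith [sub_eq_zero.mp this]

lemma sin_mem_Ioo {θ : ℝ} (hθ : θ ∈ Set.Ioo (-(Real.pi/2)) (Real.pi/2)) :
    |Real.sin θ| < 1 := by
  obtain ⟨h1, h2⟩ := hθ
  rw [abs_lt]
  constructor
  · have := Real.strictMonoOn_sin (a := -(Real.pi/2)) (b := θ)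
      ⟨le_refl _, by linarith [Real.pi_div_two_pos]⟩ ⟨h1.le, h2.le⟩ h1
    rwa [Real.sin_neg, Real.sin_pi_div_two] at this
  · have := Real.strictMonoOn_sin (a := θ) (b := Real.pi/2)
      ⟨h1.le, h2.le⟩ ⟨by linarith [Real.pi_div_two_pos], le_refl _⟩ h2
    rwa [Real.sin_pi_div_two] at this

lemma zero_mem_I : (0:ℝ) ∈ Set.Ioo (-(Real.pi/2)) (Real.pi/2) := by
  constructor <;> [linarith [Real.pi_div_two_pos]; exact Real.pi_div_two_pos]

lemma P_eq : ∀ θ ∈ Set.Ioo (-(Real.pi/2)) (Real.pi/2), FF cc (Real.sin θ) = θ := by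
  set I := Set.Ioo (-(Real.pi/2)) (Real.pi/2) with hI
  have hC2 : (0:ℝ) ≤ 2 := by norm_num
  -- step 1: the function q θ = F1 cc (sin θ) * cos θ - 1 has derivative 0 on I
  have hq : ∀ θ ∈ I, HasDerivAt (fun t => F1 cc (Real.sin t) * Real.cos t - 1) 0 θ := by
    intro θ hθ
    have hs := sin_mem_Ioo hθ
    have h1 : HasDerivAt (fun t => F1 cc (Real.sin t)) (F2 cc (Real.sin θ) * Real.cos θ) θ := by
      have := (hasDerivAt_F1 hC2 cc_abs_le hs).comp θ (Real.hasDerivAt_sin θ)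
      simpa [Function.comp_def] using this
    have h2 := (h1.mul (Real.hasDerivAt_cos θ)).sub_const 1
    refine h2.congr_deriv ?_
    have hkey := keyP hs
    have hcos : Real.cos θ^2 = 1 - Real.sin θ^2 := Real.cos_sq' θ
    linear_combination (1:ℝ) * hkey + F2 cc (Real.sin θ) * hcos
  have hq0 : F1 cc (Real.sin 0) * Real.cos 0 - 1 = 0 := by
    rw [Real.sin_zero, Real.cos_zero, F1_zero]
    have : cc 0 = 1 := by norm_num [cc, bb]
    rw [this]; ring
  have hqz : ∀ θ ∈ I, F1 cc (Real.sin θ) * Real.cos θ - 1 = 0 := by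
    intro θ hθ
    have := const_of_hasDerivAt_zero (convex_Ioo _ _) hq hθ zero_mem_I
    rw [this, hq0]
  -- step 2: the function p θ = FF cc (sin θ) - θ has derivative 0 on I
  have hp : ∀ θ ∈ I, HasDerivAt (fun t => FF cc (Real.sin t) - t) 0 θ := by
    intro θ hθ
    have hs := sin_mem_Ioo hθ
    have h1 : HasDerivAt (fun t => FF cc (Real.sin t)) (F1 cc (Real.sin θ) * Real.cos θ) θ := by
      have := (hasDerivAt_FF hC2 cc_abs_le hs).comp θ (Real.hasDerivAt_sin θ)
      simpa [Function.comp_def] using this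
    have h2 := h1.sub (hasDerivAt_id θ)
    refine h2.congr_deriv ?_
    have := hqz θ hθ
    linarith
  intro θ hθ
  have := const_of_hasDerivAt_zero (convex_Ioo _ _) hp hθ zero_mem_I
  rw [Real.sin_zero, FF_zero] at this
  linarith

lemma R_eq : ∀ θ ∈ Set.Ioo (-(Real.pi/2)) (Real.pi/2), FF BB (Real.sin θ) = θ^3/6 := by
  set I := Set.Ioo (-(Real.pi/2)) (Real.pi/2) with hI
  have hC2 : (0:ℝ) ≤ 2 := by norm_num
  have hq : ∀ θ ∈ I, HasDerivAt (fun t => F1 BB (Real.sin t) * Real.cos t - t^2/2) 0 θ := by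
    intro θ hθ
    have hs := sin_mem_Ioo hθ
    have h1 : HasDerivAt (fun t => F1 BB (Real.sin t)) (F2 BB (Real.sin θ) * Real.cos θ) θ := by
      have := (hasDerivAt_F1 hC2 BB_abs_le hs).comp θ (Real.hasDerivAt_sin θ)
      simpa [Function.comp_def] using this
    have h3 : HasDerivAt (fun t : ℝ => t^2/2) θ θ := by
      have := (hasDerivAt_pow 2 θ).div_const 2
      refine this.congr_deriv ?_
      push_cast
      ring
    have h2 := (h1.mul (Real.hasDerivAt_cos θ)).sub h3
    refine h2.congr_deriv ?_
    have hkey := keyR hs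
    have hP := P_eq θ hθ
    have hcos : Real.cos θ^2 = 1 - Real.sin θ^2 := Real.cos_sq' θ
    linear_combination (1:ℝ) * hkey + F2 BB (Real.sin θ) * hcos + hP
  have hq0 : F1 BB (Real.sin 0) * Real.cos 0 - (0:ℝ)^2/2 = 0 := by
    rw [Real.sin_zero, Real.cos_zero, F1_zero]
    have : BB 0 = 0 := by norm_num [BB, OO]
    rw [this]; ring
  have hqz : ∀ θ ∈ I, F1 BB (Real.sin θ) * Real.cos θ - θ^2/2 = 0 := by
    intro θ hθ
    have := const_of_hasDerivAt_zero (convex_Ioo _ _) hq hθ zero_mem_I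
    rw [this, hq0]
  have hp : ∀ θ ∈ I, HasDerivAt (fun t => FF BB (Real.sin t) - t^3/6) 0 θ := by
    intro θ hθ
    have hs := sin_mem_Ioo hθ
    have h1 : HasDerivAt (fun t => FF BB (Real.sin t)) (F1 BB (Real.sin θ) * Real.cos θ) θ := by
      have := (hasDerivAt_FF hC2 BB_abs_le hs).comp θ (Real.hasDerivAt_sin θ)
      simpa [Function.comp_def] using this
    have h3 : HasDerivAt (fun t : ℝ => t^3/6) (θ^2/2) θ := by
      have := (hasDerivAt_pow 3 θ).div_const 6
      refine this.congr_deriv ?_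
      push_cast
      ring
    have h2 := h1.sub h3
    refine h2.congr_deriv ?_
    have := hqz θ hθ
    linarith
  intro θ hθ
  have := const_of_hasDerivAt_zero (convex_Ioo _ _) hp hθ zero_mem_I
  rw [Real.sin_zero, FF_zero] at this
  linarith

lemma harmonic_odd (k : ℕ) :
    (∑ j ∈ Finset.Icc 1 (2*k), (1:ℝ)/(j:ℝ)^2) -
      (1/4) * ∑ j ∈ Finset.Icc 1 k, (1:ℝ)/(j:ℝ)^2 = OO k := by
  induction k with
  | zero => simp [OO]
  | succ n ih =>
    have h2 : 2*(n+1) = (2*n+1)+1 := by omega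
    rw [h2, Finset.sum_Icc_succ_top (by omega : 1 ≤ 2*n+1+1),
      Finset.sum_Icc_succ_top (by omega : 1 ≤ 2*n+1),
      Finset.sum_Icc_succ_top (by omega : 1 ≤ n+1), OO_succ]
    have hc : ((2*n+1 : ℕ):ℝ) = 2*(n:ℝ)+1 := by push_cast; ring
    have hd : ((2*n+1+1 : ℕ):ℝ) = 2*(n:ℝ)+2 := by push_cast; ring
    have he : ((n+1 : ℕ):ℝ) = (n:ℝ)+1 := by push_cast; ring
    rw [hc, hd, he]
    have hkey : (1:ℝ)/(2*(n:ℝ)+2)^2 = (1/4) * (1/((n:ℝ)+1)^2) := by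
      rw [div_mul_div_comm, one_mul]
      congr 1
      ring
    linarith [ih, hkey]

theorem sum_central_binom_harmonic2_8 :
    ∑' k : ℕ,
        (Nat.choose (2 * k) k : ℝ) / ((2 * (k : ℝ) + 1) * 8 ^ k) *
          ((∑ j ∈ Finset.Icc 1 (2 * k), (1 : ℝ) / (j : ℝ) ^ 2) -
            (1 / 4) * ∑ j ∈ Finset.Icc 1 k, (1 : ℝ) / (j : ℝ) ^ 2) =
      Real.sqrt 2 * Real.pi ^ 3 / 384 := by
  have hs2 : Real.sqrt 2 * Real.sqrt 2 = 2 := Real.mul_self_sqrt (by norm_num)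
  have hs2pos : 0 < Real.sqrt 2 := Real.sqrt_pos.mpr (by norm_num)
  have hs2lt : Real.sqrt 2 < 2 := by nlinarith
  -- the value of FF BB at √2/2
  have hmem : Real.pi/4 ∈ Set.Ioo (-(Real.pi/2)) (Real.pi/2) := by
    constructor <;> nlinarith [Real.pi_pos]
  have hval := R_eq (Real.pi/4) hmem
  rw [Real.sin_pi_div_four] at hval
  -- rewrite the sum
  have hterm : ∀ k : ℕ,
      (Nat.choose (2 * k) k : ℝ) / ((2 * (k : ℝ) + 1) * 8 ^ k) *
          ((∑ j ∈ Finset.Icc 1 (2 * k), (1 : ℝ) / (j : ℝ) ^ 2) -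
            (1 / 4) * ∑ j ∈ Finset.Icc 1 k, (1 : ℝ) / (j : ℝ) ^ 2)
        = Real.sqrt 2 * (BB k * (Real.sqrt 2/2)^(2*k+1)) := by
    intro k
    rw [harmonic_odd k]
    have hpow : (Real.sqrt 2/2)^(2*k+1) = (1/2)^k * (Real.sqrt 2/2) := by
      rw [pow_succ, pow_mul]
      congr 2
      rw [div_pow]
      rw [show (Real.sqrt 2)^2 = 2 by rw [sq]; exact hs2]
      norm_num
    rw [hpow]
    unfold BB cc bb
    have h8 : (8:ℝ)^k = 4^k * 2^k := by rw [← mul_pow]; norm_num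
    have h2k : ((2:ℝ)*k+1) ≠ 0 := by positivity
    have h4k : ((4:ℝ)^k) ≠ 0 := by positivity
    have h2kk : ((2:ℝ)^k) ≠ 0 := by positivity
    rw [h8]
    field_simp
    ring_nf
    rw [show Real.sqrt 2 ^ 2 = 2 by rw [sq]; exact hs2]
    have h12 : ((1:ℝ)/2)^k * 2^k = 1 := by rw [← mul_pow]; norm_num
    linear_combination (-(((k*2).choose k : ℝ) * OO k * 2)) * h12
  rw [tsum_congr hterm, tsum_mul_left]
  have : (∑' k : ℕ, BB k * (Real.sqrt 2/2)^(2*k+1)) = FF BB (Real.sqrt 2/2) := by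
    rw [FF]
  rw [this, hval]
  ring
end

section
/- For every real x with -1/4 < x < 1/4, \sum_{k=0}^\infty binom(2k,k) H_{2k} x^k = (1/sqrt(1-4x)) * log((1 + sqrt(1-4x)) / (2(1-4x))). -/
open Finset MeasureTheory



noncomputable def cb (n : ℕ) : ℝ := (Nat.choose (2 * n) n : ℝ)

lemma cb_pos (n : ℕ) : 0 < cb n := by
  unfold cb
  exact_mod_cast Nat.choose_pos (show n ≤ 2 * n by omega)

lemma cb_rec (n : ℕ) : (n + 1 : ℝ) * cb (n + 1) = (4 * n + 2) * cb n := by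
  have h := Nat.succ_mul_centralBinom_succ n
  have h1 : Nat.centralBinom (n+1) = Nat.choose (2*(n+1)) (n+1) := rfl
  have h2 : Nat.centralBinom n = Nat.choose (2*n) n := rfl
  rw [h1, h2] at h
  have := congrArg (fun m : ℕ => (m : ℝ)) h
  push_cast at this
  unfold cb
  linarith

lemma cb_le (n : ℕ) : cb n ≤ 4 ^ n := by
  have h1 : Nat.choose (2*n) n ≤ Nat.choose (2*n+1) n := Nat.choose_le_choose n (by omega)
  have h2 : Nat.choose (2*n+1) n ≤ 4 ^ n := Nat.choose_middle_le_pow n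
  unfold cb
  exact_mod_cast h1.trans h2

lemma cb_succ_le (n : ℕ) : cb (n+1) ≤ 4 * cb n := by
  have h := cb_rec n
  have hn : (0:ℝ) < n + 1 := by positivity
  have hp := cb_pos n
  nlinarith [cb_pos (n+1)]

-- reflection
lemma refl_sum (m : ℕ) :
    ∑ i ∈ range (m+1), ((m - i : ℕ) : ℝ) * cb i * cb (m - i)
      = ∑ i ∈ range (m+1), (i : ℝ) * cb i * cb (m - i) := by
  have := Finset.sum_range_reflect (fun i => (i : ℝ) * cb i * cb (m - i)) (m+1)
  rw [← this]
  apply Finset.sum_congr rfl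
  intro i hi
  simp only [Finset.mem_range] at hi
  have hi' : i ≤ m := by omega
  have h1 : m + 1 - 1 - i = m - i := by omega
  have h2 : m - (m - i) = i := by omega
  rw [h1, h2]
  ring

lemma two_T (m : ℕ) :
    2 * ∑ i ∈ range (m+1), (i : ℝ) * cb i * cb (m - i)
      = m * ∑ i ∈ range (m+1), cb i * cb (m - i) := by
  have h := refl_sum m
  have : ∑ i ∈ range (m+1), (i:ℝ) * cb i * cb (m-i)
      + ∑ i ∈ range (m+1), ((m - i : ℕ):ℝ) * cb i * cb (m-i)
      = ∑ i ∈ range (m+1), (m:ℝ) * (cb i * cb (m-i)) := by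
    rw [← Finset.sum_add_distrib]
    apply Finset.sum_congr rfl
    intro i hi
    simp only [Finset.mem_range] at hi
    have : ((m - i : ℕ) : ℝ) = (m : ℝ) - i := by
      have h : i ≤ m := by omega
      push_cast [Nat.cast_sub h]
      ring
    rw [this]; ring
  rw [← Finset.mul_sum] at this
  linarith [h]

lemma conv_id (k : ℕ) : ∑ i ∈ range (k+1), cb i * cb (k - i) = 4 ^ k := by
  induction k with
  | zero => simp [cb]
  | succ k ih =>
    set S := ∑ i ∈ range (k+1), cb i * cb (k - i) with hS
    have A_eq : ∑ i ∈ range (k+2), (i : ℝ) * cb i * cb (k+1-i)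
        = 2 * (k+1) * S := by
      rw [Finset.sum_range_succ' (fun i => (i:ℝ) * cb i * cb (k+1-i)) (k+1)]
      simp only [Nat.cast_zero, zero_mul, add_zero]
      have : ∀ i ∈ range (k+1), ((i+1 : ℕ):ℝ) * cb (i+1) * cb (k+1-(i+1))
          = (4 * i + 2) * cb i * cb (k - i) := by
        intro i hi
        have h1 : k + 1 - (i+1) = k - i := by omega
        rw [h1]
        have := cb_rec i
        push_cast
        push_cast at this
        nlinarith [this, cb_pos (k - i)]
      rw [Finset.sum_congr rfl this]
      have expand : ∑ i ∈ range (k+1), (4 * (i:ℝ) + 2) * cb i * cb (k-i)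
          = 4 * (∑ i ∈ range (k+1), (i:ℝ) * cb i * cb (k-i)) + 2 * S := by
        rw [hS, Finset.mul_sum, Finset.mul_sum, ← Finset.sum_add_distrib]
        apply Finset.sum_congr rfl
        intro i _; ring
      rw [expand]
      have := two_T k
      rw [← hS] at this
      linarith
    have B_eq : ∑ i ∈ range (k+2), ((k+1-i : ℕ) : ℝ) * cb i * cb (k+1-i)
        = 2 * (k+1) * S := by
      rw [refl_sum (k+1)]
      exact A_eq
    have sum_eq : (k+1+0:ℝ) * ∑ i ∈ range (k+2), cb i * cb (k+1-i)
        = 4 * (k+1) * S := by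
      have : ∑ i ∈ range (k+2), ((k+1:ℕ):ℝ) * (cb i * cb (k+1-i))
          = ∑ i ∈ range (k+2), ((i:ℝ) * cb i * cb (k+1-i)
            + ((k+1-i : ℕ):ℝ) * cb i * cb (k+1-i)) := by
        apply Finset.sum_congr rfl
        intro i hi
        simp only [Finset.mem_range] at hi
        have hle : i ≤ k+1 := by omega
        have : ((k+1-i : ℕ):ℝ) = ((k+1 : ℕ):ℝ) - i := by
          push_cast [Nat.cast_sub hle]; ring
        rw [this]
        push_cast
        ring
      rw [Finset.sum_add_distrib, A_eq, B_eq] at this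
      rw [← Finset.mul_sum] at this
      push_cast at this ⊢
      linarith
    have hk : (k+1+0:ℝ) ≠ 0 := by positivity
    have : ∑ i ∈ range (k+2), cb i * cb (k+1-i) = 4 * S := by
      field_simp at sum_eq
      nlinarith [sum_eq]
    rw [this, ih]
    ring


lemma summable_norm_cb {y : ℝ} (hy : |y| < 1/4) :
    Summable (fun k => ‖cb k * y ^ k‖) := by
  have hg : Summable (fun k : ℕ => (4 * |y|) ^ k) :=
    summable_geometric_of_lt_one (by positivity) (by linarith [abs_nonneg y])
  have hle : ∀ k : ℕ, ‖cb k * y ^ k‖ ≤ (4 * |y|) ^ k := by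
    intro k
    rw [norm_mul, norm_pow, Real.norm_eq_abs, Real.norm_eq_abs, mul_pow,
      abs_of_pos (cb_pos k)]
    exact mul_le_mul_of_nonneg_right (cb_le k) (by positivity)
  exact Summable.of_nonneg_of_le (fun k => norm_nonneg _) hle hg

lemma summable_cb {y : ℝ} (hy : |y| < 1/4) :
    Summable (fun k => cb k * y ^ k) := (summable_norm_cb hy).of_norm

lemma gf_sq {y : ℝ} (hy : |y| < 1/4) :
    (∑' k, cb k * y ^ k) * (∑' k, cb k * y ^ k) = (1 - 4 * y)⁻¹ := by
  rw [tsum_mul_tsum_eq_tsum_sum_antidiagonal_of_summable_norm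
    (summable_norm_cb hy) (summable_norm_cb hy)]
  have h4 : |4 * y| < 1 := by
    rw [abs_mul, show |(4:ℝ)| = 4 by norm_num]; linarith
  have : ∀ n : ℕ, ∑ kl ∈ antidiagonal n, (cb kl.1 * y ^ kl.1) * (cb kl.2 * y ^ kl.2)
      = (4 * y) ^ n := by
    intro n
    have : ∀ kl ∈ antidiagonal n, (cb kl.1 * y ^ kl.1) * (cb kl.2 * y ^ kl.2)
        = (cb kl.1 * cb kl.2) * y ^ n := by
      intro kl hkl
      rw [Finset.HasAntidiagonal.mem_antidiagonal] at hkl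
      rw [← hkl]; ring
    rw [Finset.sum_congr rfl this, ← Finset.sum_mul,
      Finset.Nat.sum_antidiagonal_eq_sum_range_succ_mk, conv_id n, mul_pow]
  rw [tsum_congr this, tsum_geometric_of_norm_lt_one (by rwa [Real.norm_eq_abs])]

lemma gf_pos {y : ℝ} (hy : |y| < 1/4) : 0 < ∑' k, cb k * y ^ k := by
  rcases eq_or_ne y 0 with rfl | hy0
  · have : (fun k : ℕ => cb k * (0:ℝ) ^ k) = fun k => if k = 0 then 1 else 0 := by
      funext k
      cases k with
      | zero => simp [cb]
      | succ n => simp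
    rw [this, tsum_ite_eq]
    norm_num
  · have hs := summable_cb hy
    have inj1 : Function.Injective (fun m : ℕ => 2*m) := fun a b h => by simpa using h
    have inj2 : Function.Injective (fun m : ℕ => 2*m+1) := fun a b h => by simpa using h
    have heven : Summable (fun m : ℕ => cb (2*m) * y ^ (2*m)) := hs.comp_injective inj1
    have hodd : Summable (fun m : ℕ => cb (2*m+1) * y ^ (2*m+1)) := hs.comp_injective inj2
    have hgrp : HasSum (fun m : ℕ => cb (2*m) * y ^ (2*m) + cb (2*m+1) * y ^ (2*m+1))
        (∑' k, cb k * y ^ k) := by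
      have h2 : HasSum (fun k => cb k * y ^ k)
          ((∑' m, cb (2*m) * y^(2*m)) + (∑' m, cb (2*m+1) * y^(2*m+1))) :=
        HasSum.even_add_odd heven.hasSum hodd.hasSum
      rw [h2.tsum_eq]
      exact heven.hasSum.add hodd.hasSum
    have hpos : ∀ m, 0 < cb (2*m) * y ^ (2*m) + cb (2*m+1) * y ^ (2*m+1) := by
      intro m
      have hyabs : 0 < |y| := abs_pos.2 hy0
      have hye : y ^ (2*m) = |y| ^ (2*m) := by
        rw [← abs_pow, abs_of_nonneg]
        rw [pow_mul]
        positivity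
      have hyp : (0:ℝ) < |y| ^ (2*m) := pow_pos hyabs _
      have h1 : 0 < cb (2*m) * y ^ (2*m) := by
        rw [hye]; exact mul_pos (cb_pos _) hyp
      have h2 : |cb (2*m+1) * y ^ (2*m+1)| < cb (2*m) * y ^ (2*m) := by
        rw [abs_mul, abs_of_pos (cb_pos _), abs_pow, pow_succ, hye]
        calc cb (2*m+1) * (|y|^(2*m) * |y|) ≤ (4 * cb (2*m)) * (|y|^(2*m) * |y|) := by
              apply mul_le_mul_of_nonneg_right (cb_succ_le _) (by positivity)
          _ < cb (2*m) * |y| ^ (2*m) := by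
              have h41 : (0:ℝ) < 1 - 4 * |y| := by linarith
              nlinarith [mul_pos (mul_pos (cb_pos (2*m)) hyp) h41]
      have := neg_abs_le (cb (2*m+1) * y ^ (2*m+1))
      linarith [neg_lt_of_abs_lt h2]
    calc (0:ℝ) < cb 0 * y ^ 0 + cb 1 * y ^ 1 := hpos 0
      _ ≤ ∑' m, (cb (2*m) * y ^ (2*m) + cb (2*m+1) * y ^ (2*m+1)) := by
          have := Summable.le_tsum hgrp.summable 0 (fun m _ => (hpos m).le)
          simpa using this
      _ = ∑' k, cb k * y ^ k := hgrp.tsum_eq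

lemma gf {y : ℝ} (hy : |y| < 1/4) :
    HasSum (fun k => cb k * y ^ k) (1 / Real.sqrt (1 - 4 * y)) := by
  have h1 : (0:ℝ) < 1 - 4 * y := by
    have := abs_lt.1 hy
    linarith
  have hF := gf_sq hy
  have hFpos := gf_pos hy
  have key : ∑' k, cb k * y ^ k = 1 / Real.sqrt (1 - 4 * y) := by
    have : (∑' k, cb k * y ^ k) = Real.sqrt ((1 - 4*y)⁻¹) := by
      rw [← hF, Real.sqrt_mul_self hFpos.le]
    rw [this, Real.sqrt_inv, one_div]
  rw [← key]
  exact (summable_cb hy).hasSum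


-- inner sum identity for t ∈ (0,1)
lemma chen_inner_sum (x : ℝ) (hx : |x| < 1/4) (t : ℝ) (ht : t ∈ Set.Ioo (0:ℝ) 1) :
    ∑' k, cb k * x^k * (∑ j ∈ range (2*k), t^j)
      = 4*x*(Real.sqrt (1 - 4*x*t^2) + Real.sqrt (1-4*x)*t)
          / (Real.sqrt (1-4*x) * Real.sqrt (1 - 4*x*t^2)
              * (1 - 4*x*t + Real.sqrt (1-4*x) * Real.sqrt (1 - 4*x*t^2))) := by
  obtain ⟨ht0, ht1⟩ := ht
  have hxt : |x * t^2| < 1/4 := by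
    rw [abs_mul, abs_pow]
    calc |x| * |t|^2 ≤ |x| * 1 := by
          apply mul_le_mul_of_nonneg_left _ (abs_nonneg x)
          nlinarith [abs_of_pos ht0]
      _ < 1/4 := by linarith
  have hx4' := abs_lt.1 hx
  have h14 : (0:ℝ) < 1 - 4*x := by linarith
  have h14t : (0:ℝ) < 1 - 4*(x*t^2) := by
    have := abs_lt.1 hxt
    linarith
  set s := Real.sqrt (1-4*x) with hs
  set R := Real.sqrt (1 - 4*x*t^2) with hR
  have hspos : 0 < s := Real.sqrt_pos.2 h14
  have hs2 : s^2 = 1 - 4*x := Real.sq_sqrt h14.le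
  have hRpos : 0 < R := by
    rw [hR]
    apply Real.sqrt_pos.2
    nlinarith
  have hR2 : R^2 = 1 - 4*x*t^2 := by
    rw [hR]
    rw [Real.sq_sqrt (by nlinarith)]
  set N := 1 - 4*x*t + s * R with hN
  have hNpos : 0 < N := by
    have h2 : 0 < 1 - 4*x*t := by nlinarith
    positivity
  -- the tsum
  have hgeom : ∀ k : ℕ, cb k * x^k * (∑ j ∈ range (2*k), t^j)
      = (cb k * x^k - cb k * (x*t^2)^k) / (1 - t) := by
    intro k
    have hpow : (x*t^2)^k = x^k * t^(2*k) := by rw [mul_pow, ← pow_mul]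
    rw [geom_sum_eq (by linarith : t ≠ 1), hpow]
    generalize t ^ (2*k) = T
    have hne1 : t - 1 ≠ 0 := by linarith
    have hne2 : (1:ℝ) - t ≠ 0 := by linarith
    field_simp
    ring
  have hsum : HasSum (fun k => cb k * x^k * (∑ j ∈ range (2*k), t^j))
      ((1 / s - 1 / Real.sqrt (1 - 4*(x*t^2))) / (1 - t)) := by
    have h1 := gf hx
    have h2 := gf hxt
    have := (h1.sub h2).div_const (1 - t)
    convert this using 2 with k
    · rfl
    · exact hgeom k
  have hRR : Real.sqrt (1 - 4*(x*t^2)) = R := by rw [hR]; ring_nf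
  rw [hsum.tsum_eq, hRR]
  -- algebraic identity
  have key : (R - s) * N = 4*x*(1-t)*(R + s*t) := by
    simp only [hN]
    linear_combination s * hR2 - R * hs2
  rw [div_eq_div_iff (by linarith : (1:ℝ) - t ≠ 0) (by positivity : s * R * N ≠ 0)]
  field_simp
  nlinarith [key, mul_pos hspos hRpos]


-- harmonic number as integral
lemma harm_int (n : ℕ) :
    ∫ t in Set.Ioo (0:ℝ) 1, (∑ j ∈ range n, t^j) = ∑ j ∈ Finset.Icc 1 n, (1:ℝ)/j := by
  rw [← MeasureTheory.integral_Ioc_eq_integral_Ioo,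
    ← intervalIntegral.integral_of_le (by norm_num : (0:ℝ) ≤ 1)]
  rw [intervalIntegral.integral_finset_sum]
  · have : ∀ j ∈ range n, (∫ t in (0:ℝ)..1, t^j) = 1/(j+1 : ℝ) := by
      intro j _
      rw [integral_pow]
      norm_num
    rw [Finset.sum_congr rfl this, ← Finset.Ico_add_one_right_eq_Icc, Finset.sum_Ico_eq_sum_range]
    simp only [Nat.add_sub_cancel, Nat.succ_sub_one]
    apply Finset.sum_congr rfl
    intro i _
    push_cast
    rw [add_comm]
  · intro j _
    exact (continuous_pow j).intervalIntegrable 0 1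

lemma bound_summable {x : ℝ} (hx : |x| < 1/4) :
    Summable (fun k : ℕ => cb k * |x|^k * (2*k)) := by
  have hgeo : Summable (fun k : ℕ => (k : ℝ) ^ 1 * (4*|x|) ^ k) := by
    apply summable_pow_mul_geometric_of_norm_lt_one
    rw [Real.norm_eq_abs, abs_of_nonneg (by positivity)]
    linarith [abs_nonneg x]
  apply Summable.of_nonneg_of_le _ _ (hgeo.mul_left 2)
  · intro k
    have := cb_pos k
    positivity
  · intro k
    have h1 : cb k * |x|^k ≤ (4*|x|)^k := by
      rw [mul_pow]
      exact mul_le_mul_of_nonneg_right (cb_le k) (by positivity)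
    have h2 : (0:ℝ) ≤ (2*k) := by positivity
    calc cb k * |x|^k * (2*k) ≤ (4*|x|)^k * (2*k) := by
          apply mul_le_mul_of_nonneg_right h1 h2
      _ = 2 * ((k:ℝ)^1 * (4*|x|)^k) := by ring
  
-- the swap
lemma swap_int {x : ℝ} (hx : |x| < 1/4) :
    ∑' k : ℕ, cb k * x^k * (∑ j ∈ Finset.Icc 1 (2*k), (1:ℝ)/j)
      = ∫ t in Set.Ioo (0:ℝ) 1, (∑' k : ℕ, cb k * x^k * (∑ j ∈ range (2*k), t^j)) := by
  have key := MeasureTheory.integral_tsum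
    (f := fun (k : ℕ) (t : ℝ) => cb k * x^k * (∑ j ∈ range (2*k), t^j))
    (μ := volume.restrict (Set.Ioo (0:ℝ) 1))
    (fun k => (Continuous.aestronglyMeasurable (by continuity)))
    ?_
  · rw [key]
    apply tsum_congr
    intro k
    rw [MeasureTheory.integral_const_mul, harm_int]
  · -- lintegral bound
    have hb : ∀ k : ℕ, ∫⁻ t in Set.Ioo (0:ℝ) 1, ‖cb k * x^k * (∑ j ∈ range (2*k), t^j)‖₊
        ≤ ENNReal.ofReal (cb k * |x|^k * (2*k)) := by
      intro k
      have hle : ∀ t ∈ Set.Ioo (0:ℝ) 1,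
          (‖cb k * x^k * (∑ j ∈ range (2*k), t^j)‖₊ : ENNReal)
            ≤ ENNReal.ofReal (cb k * |x|^k * (2*k)) := by
        intro t ht
        obtain ⟨ht0, ht1⟩ := ht
        rw [← enorm_eq_nnnorm, ← ofReal_norm]
        apply ENNReal.ofReal_le_ofReal
        rw [norm_mul, norm_mul, Real.norm_eq_abs, Real.norm_eq_abs, Real.norm_eq_abs,
          abs_of_pos (cb_pos k), abs_pow]
        apply mul_le_mul_of_nonneg_left _ (by have := cb_pos k; positivity)
        calc |∑ j ∈ range (2*k), t^j| ≤ ∑ j ∈ range (2*k), |t^j| := Finset.abs_sum_le_sum_abs _ _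
          _ ≤ ∑ j ∈ range (2*k), 1 := by
              apply Finset.sum_le_sum
              intro j _
              rw [abs_pow, abs_of_pos ht0]
              exact pow_le_one₀ ht0.le ht1.le
          _ = 2*k := by simp
      calc ∫⁻ t in Set.Ioo (0:ℝ) 1, ‖cb k * x^k * (∑ j ∈ range (2*k), t^j)‖₊
          ≤ ∫⁻ _ in Set.Ioo (0:ℝ) 1, ENNReal.ofReal (cb k * |x|^k * (2*k)) := by
            apply MeasureTheory.setLIntegral_mono' measurableSet_Ioo hle
        _ = ENNReal.ofReal (cb k * |x|^k * (2*k)) := by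
            rw [MeasureTheory.setLIntegral_const]
            rw [Real.volume_Ioo]
            norm_num
    apply ne_top_of_le_ne_top _ (ENNReal.tsum_le_tsum hb)
    rw [← ENNReal.ofReal_tsum_of_nonneg (fun k => by have := cb_pos k; positivity)
      (bound_summable hx)]
    exact ENNReal.ofReal_ne_top

section FTC
variable (x : ℝ)

lemma ftc_piece (hx : |x| < 1/4) :
    ∫ t in (0:ℝ)..1,
        (4*x*(Real.sqrt (1 - 4*x*t^2) + Real.sqrt (1-4*x)*t)
          / (Real.sqrt (1-4*x) * Real.sqrt (1 - 4*x*t^2)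
              * (1 - 4*x*t + Real.sqrt (1-4*x) * Real.sqrt (1 - 4*x*t^2))))
      = 1 / Real.sqrt (1-4*x) * Real.log ((1 + Real.sqrt (1-4*x)) / (2*(1-4*x))) := by
  have hx4 : |4*x| < 1 := by rw [abs_mul, show |(4:ℝ)| = 4 by norm_num]; linarith
  have hx4' := abs_lt.1 hx4
  have h14 : (0:ℝ) < 1 - 4*x := by linarith
  set s := Real.sqrt (1-4*x) with hs
  have hspos : 0 < s := Real.sqrt_pos.2 h14
  have hs2 : s^2 = 1 - 4*x := Real.sq_sqrt h14.le
  set R : ℝ → ℝ := fun t => Real.sqrt (1 - 4*x*t^2) with hR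
  set N : ℝ → ℝ := fun t => 1 - 4*x*t + s * R t with hN
  set G : ℝ → ℝ := fun t => -(1/s) * Real.log (N t) with hG
  set g : ℝ → ℝ := fun t => 4*x*(R t + s*t) / (s * R t * N t) with hg
  have hupos : ∀ t ∈ Set.Icc (0:ℝ) 1, 0 < 1 - 4*x*t^2 := by
    intro t ht
    obtain ⟨h0, h1⟩ := ht
    nlinarith [sq_nonneg t, sq_nonneg (1-t)]
  have hRpos : ∀ t ∈ Set.Icc (0:ℝ) 1, 0 < R t := fun t ht => Real.sqrt_pos.2 (hupos t ht)
  have hR2 : ∀ t ∈ Set.Icc (0:ℝ) 1, (R t)^2 = 1 - 4*x*t^2 :=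
    fun t ht => Real.sq_sqrt (hupos t ht).le
  have hNpos : ∀ t ∈ Set.Icc (0:ℝ) 1, 0 < N t := by
    intro t ht
    obtain ⟨h0, h1⟩ := ht
    have h2 : 0 < 1 - 4*x*t := by nlinarith
    have := mul_pos hspos (hRpos t ⟨h0, h1⟩)
    simp only [hN]
    nlinarith
  have hderiv : ∀ t ∈ Set.uIcc (0:ℝ) 1, HasDerivAt G (g t) t := by
    intro t ht
    rw [Set.uIcc_of_le (by norm_num : (0:ℝ) ≤ 1)] at ht
    have hu : HasDerivAt (fun t : ℝ => 1 - 4*x*t^2) (-(8*x*t)) t := by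
      have : HasDerivAt (fun t : ℝ => 1 - 4*x*t^2) (0 - 4*x*(2*t^1)) t := by
        exact (hasDerivAt_const t 1).sub (((hasDerivAt_pow 2 t)).const_mul (4*x))
      convert this using 1; ring
    have hRd : HasDerivAt R (-(8*x*t) / (2 * R t)) t := hu.sqrt (hupos t ht).ne'
    have hNd : HasDerivAt N (-(4*x) + s * (-(8*x*t) / (2 * R t))) t := by
      have h1 : HasDerivAt (fun t : ℝ => 1 - 4*x*t) (-(4*x)) t := by
        have : HasDerivAt (fun t : ℝ => 1 - 4*x*t) (0 - 4*x*1) t :=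
          (hasDerivAt_const t 1).sub ((hasDerivAt_id t).const_mul (4*x))
        convert this using 1; ring
      exact h1.add (hRd.const_mul s)
    have hGd : HasDerivAt G (-(1/s) * ((-(4*x) + s * (-(8*x*t) / (2 * R t))) / N t)) t :=
      (hNd.log (hNpos t ht).ne').const_mul (-(1/s))
    convert hGd using 1
    have hRt := hRpos t ht
    have hNt := hNpos t ht
    simp only [hg]
    field_simp
    ring
  have hcont : ContinuousOn g (Set.uIcc (0:ℝ) 1) := by
    rw [Set.uIcc_of_le (by norm_num : (0:ℝ) ≤ 1)]
    have hRc : ContinuousOn R (Set.Icc (0:ℝ) 1) := by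
      apply ContinuousOn.sqrt
      fun_prop
    have hNc : ContinuousOn N (Set.Icc (0:ℝ) 1) := by
      apply ContinuousOn.add
      · fun_prop
      · exact hRc.const_smul s
    apply ContinuousOn.div
    · apply ContinuousOn.mul continuousOn_const
      exact (hRc.add (continuousOn_id.const_smul s))
    · exact (continuousOn_const.mul hRc).mul hNc
    · intro t ht
      exact (mul_pos (mul_pos hspos (hRpos t ht)) (hNpos t ht)).ne'
  have hint : IntervalIntegrable g MeasureTheory.volume 0 1 := hcont.intervalIntegrable
  have := intervalIntegral.integral_eq_sub_of_hasDerivAt hderiv hint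
  rw [this]
  have hR1 : R 1 = s := by simp only [hR]; norm_num; exact hs.symm
  have hR0 : R 0 = 1 := by simp only [hR]; norm_num
  have hN1 : N 1 = 2 * (1 - 4*x) := by
    simp only [hN, hR1]
    nlinarith [hs2]
  have hN0 : N 0 = 1 + s := by simp only [hN, hR0]; ring
  simp only [hG, hN1, hN0]
  rw [Real.log_div (by positivity) (by positivity)]
  ring
end FTC


theorem chen (x : ℝ) (hx1 : -(1/4) < x) (hx2 : x < 1/4) :
    ∑' k : ℕ,
        (Nat.choose (2 * k) k : ℝ) * (∑ j ∈ Finset.Icc 1 (2 * k), (1 : ℝ) / (j : ℝ)) * x ^ k =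
      1 / Real.sqrt (1 - 4 * x) *
        Real.log ((1 + Real.sqrt (1 - 4 * x)) / (2 * (1 - 4 * x))) := by
  have hx : |x| < 1/4 := abs_lt.2 ⟨by linarith, hx2⟩
  have h1 : ∑' k : ℕ,
        (Nat.choose (2 * k) k : ℝ) * (∑ j ∈ Finset.Icc 1 (2 * k), (1 : ℝ) / (j : ℝ)) * x ^ k
      = ∑' k : ℕ, cb k * x^k * (∑ j ∈ Finset.Icc 1 (2*k), (1:ℝ)/j) := by
    apply tsum_congr
    intro k
    unfold cb
    ring
  rw [h1, swap_int hx]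
  have h2 : ∫ t in Set.Ioo (0:ℝ) 1, (∑' k : ℕ, cb k * x^k * (∑ j ∈ range (2*k), t^j))
      = ∫ t in Set.Ioo (0:ℝ) 1,
          (4*x*(Real.sqrt (1 - 4*x*t^2) + Real.sqrt (1-4*x)*t)
            / (Real.sqrt (1-4*x) * Real.sqrt (1 - 4*x*t^2)
                * (1 - 4*x*t + Real.sqrt (1-4*x) * Real.sqrt (1 - 4*x*t^2)))) := by
    apply MeasureTheory.setIntegral_congr_fun measurableSet_Ioo
    intro t ht
    exact chen_inner_sum x hx t ht
  rw [h2, ← MeasureTheory.integral_Ioc_eq_integral_Ioo,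
    ← intervalIntegral.integral_of_le (by norm_num : (0:ℝ) ≤ 1)]
  exact ftc_piece x hx
end

section
/- \sum_{k=0}^\infty binom(2k,k) H_k / 8^k = -sqrt(2) * log(12 - 8 sqrt(2)). -/
open Finset MeasureTheory

lemma cb_sym (n : ℕ) :
    2 * (∑ i ∈ range (n+1), (i:ℝ) * Nat.centralBinom i * Nat.centralBinom (n-i))
      = n * ∑ i ∈ range (n+1), (Nat.centralBinom i : ℝ) * Nat.centralBinom (n-i) := by
  have h := Finset.sum_range_reflect
    (fun i => (i:ℝ) * Nat.centralBinom i * Nat.centralBinom (n-i)) (n+1)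
  rw [two_mul]
  nth_rewrite 1 [← h]
  rw [← Finset.sum_add_distrib, Finset.mul_sum]
  apply Finset.sum_congr rfl
  intro i hi
  have hin : i ≤ n := Nat.lt_succ_iff.mp (Finset.mem_range.mp hi)
  simp only [Nat.add_sub_cancel]
  rw [Nat.sub_sub_self hin, Nat.cast_sub hin]
  ring

lemma cb_rec_s8 (i : ℕ) : ((i:ℝ)+1) * Nat.centralBinom (i+1) = (4*i+2) * Nat.centralBinom i := by
  have h := Nat.succ_mul_centralBinom_succ i
  have : ((i+1) * Nat.centralBinom (i+1) : ℝ) = (2 * (2*i+1) * Nat.centralBinom i : ℕ) := by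
    exact_mod_cast congrArg (Nat.cast : ℕ → ℝ) h
  push_cast at this
  push_cast
  linarith

lemma cb_conv (n : ℕ) :
    (∑ i ∈ range (n+1), (Nat.centralBinom i : ℝ) * Nat.centralBinom (n-i)) = 4^n := by
  induction n with
  | zero => simp [Nat.centralBinom]
  | succ n ih =>
    have hshift : (∑ i ∈ range (n+2), (i:ℝ) * Nat.centralBinom i * Nat.centralBinom (n+1-i))
        = 4 * (∑ i ∈ range (n+1), (i:ℝ) * Nat.centralBinom i * Nat.centralBinom (n-i))
          + 2 * ∑ i ∈ range (n+1), (Nat.centralBinom i : ℝ) * Nat.centralBinom (n-i) := by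
      rw [Finset.sum_range_succ']
      simp only [Nat.cast_zero, zero_mul, add_zero]
      rw [Finset.mul_sum, Finset.mul_sum, ← Finset.sum_add_distrib]
      apply Finset.sum_congr rfl
      intro i hi
      have h1 : n + 1 - (i+1) = n - i := by omega
      rw [h1]
      have h2 := cb_rec_s8 i
      push_cast
      nlinarith [h2, sq_nonneg ((Nat.centralBinom (n-i) : ℝ))]
    have hs1 := cb_sym (n+1)
    have hs0 := cb_sym n
    have hpos : ((n:ℝ)+1) ≠ 0 := by positivity
    have key : ((n:ℝ)+1) * (∑ i ∈ range (n+2), (Nat.centralBinom i : ℝ) * Nat.centralBinom (n+1-i))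
        = ((n:ℝ)+1) * 4^(n+1) := by
      push_cast at hs1
      calc ((n:ℝ)+1) * (∑ i ∈ range (n+2), (Nat.centralBinom i : ℝ) * Nat.centralBinom (n+1-i))
          = 2 * (∑ i ∈ range (n+2), (i:ℝ) * Nat.centralBinom i * Nat.centralBinom (n+1-i)) := hs1.symm
        _ = 8 * (∑ i ∈ range (n+1), (i:ℝ) * Nat.centralBinom i * Nat.centralBinom (n-i))
              + 4 * ∑ i ∈ range (n+1), (Nat.centralBinom i : ℝ) * Nat.centralBinom (n-i) := by
            rw [hshift]; ring
        _ = 4 * ((n:ℝ)) * (∑ i ∈ range (n+1), (Nat.centralBinom i : ℝ) * Nat.centralBinom (n-i))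
              + 4 * ∑ i ∈ range (n+1), (Nat.centralBinom i : ℝ) * Nat.centralBinom (n-i) := by
            linarith
        _ = ((n:ℝ)+1) * 4^(n+1) := by rw [ih]; ring
    exact mul_left_cancel₀ hpos key


lemma cb_le_four_pow (n : ℕ) : Nat.centralBinom n ≤ 4 ^ n := by
  rw [Nat.centralBinom]
  calc (2*n).choose n ≤ ∑ i ∈ range (2*n+1), (2*n).choose i :=
        Finset.single_le_sum (f := fun i => (2*n).choose i) (fun _ _ => Nat.zero_le _)
          (Finset.mem_range.mpr (by omega))
    _ = 2 ^ (2*n) := Nat.sum_range_choose (2*n)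
    _ = 4 ^ n := by rw [pow_mul]; norm_num

lemma summable_cb_s8 {x : ℝ} (h0 : 0 ≤ x) (h4 : x < 1/4) :
    Summable (fun k => (Nat.centralBinom k : ℝ) * x ^ k) := by
  apply Summable.of_nonneg_of_le (fun k => by positivity) (fun k => ?_)
    (summable_geometric_of_lt_one (r := 4*x) (by positivity) (by linarith))
  calc (Nat.centralBinom k : ℝ) * x^k ≤ 4^k * x^k := by
        gcongr; exact_mod_cast cb_le_four_pow k
    _ = (4*x)^k := (mul_pow 4 x k).symm

lemma hasSum_cb {x : ℝ} (h0 : 0 ≤ x) (h4 : x < 1/4) :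
    HasSum (fun k => (Nat.centralBinom k : ℝ) * x ^ k) (1 / Real.sqrt (1 - 4*x)) := by
  have hsum := summable_cb_s8 h0 h4
  have hHas := hsum.hasSum
  set S := ∑' k, (Nat.centralBinom k : ℝ) * x ^ k with hS
  have hnorm : Summable (fun k => ‖(Nat.centralBinom k : ℝ) * x ^ k‖) := by
    exact hsum.congr fun k => (Real.norm_of_nonneg (by positivity)).symm
  have h14 : 0 < 1 - 4*x := by linarith
  have hsq : S * S = 1/(1-4*x) := by
    rw [hS, tsum_mul_tsum_eq_tsum_sum_range_of_summable_norm hnorm hnorm]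
    have : ∀ n : ℕ, ∑ k ∈ range (n+1),
        ((Nat.centralBinom k : ℝ) * x ^ k) * ((Nat.centralBinom (n-k) : ℝ) * x ^ (n-k))
        = (4*x)^n := by
      intro n
      rw [mul_pow, ← cb_conv n, Finset.sum_mul]
      apply Finset.sum_congr rfl
      intro k hk
      have hkn : k ≤ n := Nat.lt_succ_iff.mp (Finset.mem_range.mp hk)
      rw [show x ^ n = x ^ k * x ^ (n-k) by rw [← pow_add, Nat.add_sub_cancel' hkn]]
      ring
    rw [tsum_congr this, tsum_geometric_of_lt_one (by positivity) (by linarith), one_div]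
  have hone : (1:ℝ) ≤ S := by
    have := le_hasSum hHas 0 (fun i _ => by positivity)
    simpa [Nat.centralBinom] using this
  have hSval : S = 1 / Real.sqrt (1 - 4*x) := by
    have h1 : S = Real.sqrt (S * S) := (Real.sqrt_mul_self (by linarith)).symm
    rw [hsq, one_div, Real.sqrt_inv, ← one_div] at h1
    exact h1
  exact hSval ▸ hHas


lemma integral_pow_sub_one {j : ℕ} (hj : 1 ≤ j) : ∫ t in (0:ℝ)..1, t^(j-1) = 1/j := by
  rw [integral_pow]
  have h : j - 1 + 1 = j := Nat.succ_pred_eq_of_pos hj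
  rw [h, one_pow, zero_pow (by omega), sub_zero, Nat.cast_sub hj]
  norm_num

lemma contF (k : ℕ) :
    Continuous (fun t : ℝ => (Nat.centralBinom k : ℝ) * (∑ j ∈ Icc 1 k, t^(j-1)) / 8^k) := by
  fun_prop

lemma integral_F (k : ℕ) :
    ∫ t in Set.Ioo (0:ℝ) 1, (Nat.centralBinom k : ℝ) * (∑ j ∈ Icc 1 k, t^(j-1)) / 8^k
      = (Nat.centralBinom k : ℝ) * (∑ j ∈ Icc 1 k, (1:ℝ)/j) / 8^k := by
  rw [← MeasureTheory.integral_Ioc_eq_integral_Ioo, ← intervalIntegral.integral_of_le zero_le_one]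
  have h : ∀ t : ℝ, (Nat.centralBinom k : ℝ) * (∑ j ∈ Icc 1 k, t^(j-1)) / 8^k
      = ((Nat.centralBinom k : ℝ)/8^k) * ∑ j ∈ Icc 1 k, t^(j-1) := fun t => by ring
  simp_rw [h]
  rw [intervalIntegral.integral_const_mul,
    intervalIntegral.integral_finset_sum (fun j _ => (continuous_pow _).intervalIntegrable 0 1)]
  rw [Finset.sum_congr rfl (fun j hj => integral_pow_sub_one (Finset.mem_Icc.mp hj).1)]
  ring

lemma integrable_F (k : ℕ) :
    MeasureTheory.IntegrableOn
      (fun t : ℝ => (Nat.centralBinom k : ℝ) * (∑ j ∈ Icc 1 k, t^(j-1)) / 8^k)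
      (Set.Ioo (0:ℝ) 1) :=
  ((contF k).integrableOn_Icc).mono_set Set.Ioo_subset_Icc_self

lemma hasSum_pointwise {t : ℝ} (ht : t ∈ Set.Ioo (0:ℝ) 1) :
    HasSum (fun k => (Nat.centralBinom k : ℝ) * (∑ j ∈ Icc 1 k, t^(j-1)) / 8^k)
      (Real.sqrt 2 / (Real.sqrt (2-t) * (Real.sqrt (2-t) + 1))) := by
  obtain ⟨ht0, ht1⟩ := ht
  have hne1 : (1:ℝ) - t ≠ 0 := sub_ne_zero.mpr (ne_of_lt ht1).symm
  have hgeom : ∀ k : ℕ, (∑ j ∈ Icc 1 k, t^(j-1)) = (1 - t^k)/(1-t) := by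
    intro k
    rw [← Finset.Ico_add_one_right_eq_Icc, Finset.sum_Ico_eq_sum_range]
    have h1 : ∀ i ∈ range (k+1-1), t^(1+i-1) = t^i := fun i _ => by congr 1; omega
    rw [Finset.sum_congr rfl h1, Nat.add_sub_cancel, geom_sum_eq (ne_of_lt ht1) k]
    have h2 : t - 1 ≠ 0 := sub_ne_zero.mpr (ne_of_lt ht1)
    field_simp
    ring
  have key : ∀ k : ℕ, (Nat.centralBinom k : ℝ) * (∑ j ∈ Icc 1 k, t^(j-1)) / 8^k
      = ((Nat.centralBinom k : ℝ) * (1/8:ℝ)^k - (Nat.centralBinom k : ℝ) * (t/8)^k) * (1/(1-t)) := by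
    intro k
    rw [hgeom k, div_pow, div_pow]
    have h8 : (8:ℝ)^k ≠ 0 := by positivity
    field_simp
    ring
  have h1 := hasSum_cb (x := 1/8) (by norm_num) (by norm_num)
  have h2 := hasSum_cb (x := t/8) (by positivity) (by linarith)
  have hs := (h1.sub h2).mul_right (1/(1-t))
  have hval : (1 / Real.sqrt (1 - 4*(1/8)) - 1 / Real.sqrt (1 - 4*(t/8))) * (1/(1-t))
      = Real.sqrt 2 / (Real.sqrt (2-t) * (Real.sqrt (2-t) + 1)) := by
    have e1 : (1:ℝ) - 4*(1/8) = 2⁻¹ := by norm_num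
    have e2 : (1:ℝ) - 4*(t/8) = (2-t)/2 := by ring
    rw [e1, e2, Real.sqrt_inv, Real.sqrt_div (by linarith) 2]
    have hs2 : Real.sqrt 2 > 0 := Real.sqrt_pos.mpr (by norm_num)
    obtain ⟨s, hsq⟩ : ∃ s, Real.sqrt (2-t) = s := ⟨_, rfl⟩
    have hs2t : s^2 = 2 - t := by rw [← hsq]; exact Real.sq_sqrt (by linarith)
    have hs1 : 1 < s := by
      rw [← hsq]
      nlinarith [Real.sqrt_nonneg (2-t), Real.sq_sqrt (show (0:ℝ) ≤ 2-t by linarith)]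
    rw [hsq]
    have h1t : 1 - t = (s-1)*(s+1) := by linear_combination -hs2t
    rw [h1t]
    have hne : s - 1 ≠ 0 := sub_ne_zero.mpr (ne_of_gt hs1)
    have hne2 : s + 1 ≠ 0 := by positivity
    have hnes : s ≠ 0 := by positivity
    field_simp
  rw [← hval]
  exact (funext key : _) ▸ hs

lemma integral_val :
    ∫ t in Set.Ioo (0:ℝ) 1, Real.sqrt 2 / (Real.sqrt (2-t) * (Real.sqrt (2-t) + 1))
      = 2*Real.sqrt 2*Real.log (Real.sqrt 2+1) - 2*Real.sqrt 2*Real.log 2 := by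
  rw [← MeasureTheory.integral_Ioc_eq_integral_Ioo, ← intervalIntegral.integral_of_le zero_le_one]
  have l : ∀ x ∈ Set.uIcc (0:ℝ) 1,
      HasDerivAt (fun t => -2*Real.sqrt 2 * Real.log (Real.sqrt (2-t)+1))
        (Real.sqrt 2/(Real.sqrt (2-x)*(Real.sqrt (2-x)+1))) x := by
    intro x hx
    rw [Set.uIcc_of_le zero_le_one] at hx
    obtain ⟨hx0, hx1⟩ := hx
    have h2x : (0:ℝ) < 2 - x := by linarith
    have hs0 : 0 < Real.sqrt (2-x) := Real.sqrt_pos.mpr h2x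
    have d1 : HasDerivAt (fun t:ℝ => 2 - t) (-1) x := by
      simpa using (hasDerivAt_id x).const_sub 2
    have d2 : HasDerivAt (fun t:ℝ => Real.sqrt (2-t)) (1/(2*Real.sqrt (2-x)) * (-1)) x :=
      (Real.hasDerivAt_sqrt (ne_of_gt h2x)).comp x d1
    have d3 : HasDerivAt (fun t:ℝ => Real.sqrt (2-t) + 1) (1/(2*Real.sqrt (2-x)) * (-1)) x :=
      d2.add_const 1
    have hne : Real.sqrt (2-x) + 1 ≠ 0 := by positivity
    have d4 : HasDerivAt (fun t:ℝ => Real.log (Real.sqrt (2-t)+1))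
        ((Real.sqrt (2-x)+1)⁻¹ * (1/(2*Real.sqrt (2-x)) * (-1))) x :=
      by have := (Real.hasDerivAt_log hne).comp x d3; exact this
    have d5 := d4.const_mul (-2*Real.sqrt 2)
    refine d5.congr_deriv ?_
    field_simp [hs0.ne']
  have hcont : ContinuousOn (fun x => Real.sqrt 2/(Real.sqrt (2-x)*(Real.sqrt (2-x)+1)))
      (Set.uIcc (0:ℝ) 1) := by
    apply ContinuousOn.div continuousOn_const
    · fun_prop
    · intro x hx
      rw [Set.uIcc_of_le zero_le_one] at hx
      have : 0 < Real.sqrt (2-x) := Real.sqrt_pos.mpr (by linarith [hx.2])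
      positivity
  rw [intervalIntegral.integral_eq_sub_of_hasDerivAt l hcont.intervalIntegrable]
  norm_num [Real.sqrt_one]
  ring


lemma harmonic_le (k : ℕ) : (∑ j ∈ Icc 1 k, (1:ℝ)/j) ≤ k := by
  calc (∑ j ∈ Icc 1 k, (1:ℝ)/j) ≤ ∑ j ∈ Icc 1 k, (1:ℝ) := by
        apply Finset.sum_le_sum
        intro j hj
        have hj1 : 1 ≤ j := (Finset.mem_Icc.mp hj).1
        rw [div_le_one (by exact_mod_cast hj1)]
        exact_mod_cast hj1
    _ = k := by simp [Nat.card_Icc]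

lemma summable_norm_integrals :
    Summable (fun k => ∫ t in Set.Ioo (0:ℝ) 1,
      ‖(Nat.centralBinom k : ℝ) * (∑ j ∈ Icc 1 k, t^(j-1)) / 8^k‖) := by
  have hpt : ∀ k : ℕ, ∫ t in Set.Ioo (0:ℝ) 1,
      ‖(Nat.centralBinom k : ℝ) * (∑ j ∈ Icc 1 k, t^(j-1)) / 8^k‖
      = (Nat.centralBinom k : ℝ) * (∑ j ∈ Icc 1 k, (1:ℝ)/j) / 8^k := by
    intro k
    rw [← integral_F k]
    apply MeasureTheory.setIntegral_congr_fun measurableSet_Ioo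
    intro t ht
    apply Real.norm_of_nonneg
    have : (0:ℝ) ≤ ∑ j ∈ Icc 1 k, t^(j-1) :=
      Finset.sum_nonneg fun j _ => pow_nonneg (le_of_lt ht.1) _
    positivity
  rw [funext hpt]
  apply Summable.of_nonneg_of_le (f := fun k : ℕ => (k:ℝ) * (1/2)^k)
  · intro k
    have : (0:ℝ) ≤ ∑ j ∈ Icc 1 k, (1:ℝ)/j :=
      Finset.sum_nonneg fun j _ => by positivity
    positivity
  · intro k
    have h1 : (Nat.centralBinom k : ℝ) ≤ 4^k := by exact_mod_cast cb_le_four_pow k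
    have h2 := harmonic_le k
    have h3 : (0:ℝ) ≤ ∑ j ∈ Icc 1 k, (1:ℝ)/j :=
      Finset.sum_nonneg fun j _ => by positivity
    calc (Nat.centralBinom k : ℝ) * (∑ j ∈ Icc 1 k, (1:ℝ)/j) / 8^k
        ≤ 4^k * (k:ℝ) / 8^k := by gcongr
      _ = (k:ℝ) * (1/2)^k := by
          rw [div_pow, one_pow, show (8:ℝ)^k = 2^k * 4^k by rw [← mul_pow]; norm_num]
          have h2k : (2:ℝ)^k ≠ 0 := by positivity
          have h4k : (4:ℝ)^k ≠ 0 := by positivity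
          field_simp
  · have := summable_pow_mul_geometric_of_norm_lt_one 1 (r := (1:ℝ)/2) (by norm_num)
    simpa using this

lemma sqrt2_gt_one : (1:ℝ) < Real.sqrt 2 := by
  nlinarith [Real.sq_sqrt (show (0:ℝ) ≤ 2 by norm_num), Real.sqrt_nonneg 2]

lemma final_alg :
    2*Real.sqrt 2*Real.log (Real.sqrt 2+1) - 2*Real.sqrt 2*Real.log 2
      = -(Real.sqrt 2) * Real.log (12 - 8 * Real.sqrt 2) := by
  have h2 : Real.sqrt 2 ^ 2 = 2 := Real.sq_sqrt (by norm_num)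
  have h1lt := sqrt2_gt_one
  have hkey : 12 - 8*Real.sqrt 2 = (2*(Real.sqrt 2 - 1))^2 := by linear_combination (-4)*h2
  rw [hkey, Real.log_pow]
  have hsub : Real.sqrt 2 - 1 ≠ 0 := sub_ne_zero.mpr (ne_of_gt h1lt)
  rw [Real.log_mul (by norm_num) hsub]
  have hinv : Real.sqrt 2 - 1 = (Real.sqrt 2 + 1)⁻¹ := by
    apply eq_inv_of_mul_eq_one_left
    linear_combination h2
  rw [hinv, Real.log_inv]
  push_cast
  ring

theorem boyadzhiev_at_eighth :
    ∑' k : ℕ,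
        (Nat.choose (2 * k) k : ℝ) * (∑ j ∈ Finset.Icc 1 k, (1 : ℝ) / (j : ℝ)) / 8 ^ k =
      -(Real.sqrt 2) * Real.log (12 - 8 * Real.sqrt 2) := by
  have hcb : ∀ k : ℕ, ((2*k).choose k : ℝ) = (Nat.centralBinom k : ℝ) := fun k => by
    rw [Nat.centralBinom_eq_two_mul_choose]
  calc ∑' k : ℕ, (Nat.choose (2 * k) k : ℝ) * (∑ j ∈ Finset.Icc 1 k, (1 : ℝ) / (j : ℝ)) / 8 ^ k
      = ∑' k : ℕ, (Nat.centralBinom k : ℝ) * (∑ j ∈ Icc 1 k, (1:ℝ)/j) / 8^k := by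
        exact tsum_congr fun k => by rw [hcb]
    _ = ∑' k : ℕ, ∫ t in Set.Ioo (0:ℝ) 1,
          (Nat.centralBinom k : ℝ) * (∑ j ∈ Icc 1 k, t^(j-1)) / 8^k := by
        exact tsum_congr fun k => (integral_F k).symm
    _ = ∫ t in Set.Ioo (0:ℝ) 1, ∑' k : ℕ,
          (Nat.centralBinom k : ℝ) * (∑ j ∈ Icc 1 k, t^(j-1)) / 8^k :=
        MeasureTheory.integral_tsum_of_summable_integral_norm
          (fun k => integrable_F k) summable_norm_integrals
    _ = ∫ t in Set.Ioo (0:ℝ) 1, Real.sqrt 2 / (Real.sqrt (2-t) * (Real.sqrt (2-t) + 1)) := by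
        apply MeasureTheory.setIntegral_congr_fun measurableSet_Ioo
        intro t ht
        exact (hasSum_pointwise ht).tsum_eq
    _ = 2*Real.sqrt 2*Real.log (Real.sqrt 2+1) - 2*Real.sqrt 2*Real.log 2 := integral_val
    _ = -(Real.sqrt 2) * Real.log (12 - 8 * Real.sqrt 2) := final_alg
end
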